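/- arXiv:1010.5864 — 4 statements merged into one kernel-verified Lean document; each statement's English description precedes it below -/
import Mathlib

section
/- There exists a universal constant C > 0 such that for all κ ≥ 2 and all v ∈ H¹(ℝ²), ∫_{|y| ≤ κ} |v(y)|² dy ≤ C κ² (log κ) ( ∫_{ℝ²} |∇v(y)|² dy + ∫_{|y| ≤ 1} |v(y)|² e^{−|y|} dy ). -/
open MeasureTheory

noncomputable section

namespace Stmt1Aux

open Real Set

abbrev E2 : Type := EuclideanSpace ℝ (Fin 2)

def eE : E2 ≃ᵐ ℝ × ℝ :=
  (MeasurableEquiv.toLp 2 (Fin 2 → ℝ)).symm.trans (MeasurableEquiv.finTwoArrow)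

lemma eE_mp : MeasurePreserving (eE) (volume : Measure E2) (volume : Measure (ℝ × ℝ)) :=
  (volume_preserving_finTwoArrow ℝ).comp (EuclideanSpace.volume_preserving_symm_measurableEquiv_toLp (Fin 2))

def ιL : (ℝ × ℝ) →L[ℝ] E2 :=
  ((EuclideanSpace.equiv (Fin 2) ℝ).symm : (Fin 2 → ℝ) →L[ℝ] E2).comp
    (ContinuousLinearMap.pi
      (fun i => ![ContinuousLinearMap.fst ℝ ℝ ℝ, ContinuousLinearMap.snd ℝ ℝ ℝ] i))

lemma ιL_apply_coord (p : ℝ × ℝ) (i : Fin 2) :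
    (ιL p) i = ![p.1, p.2] i := by
  fin_cases i <;> rfl

lemma eE_symm_eq (p : ℝ × ℝ) : eE.symm p = ιL p := by
  have h : eE (ιL p) = p := by
    show ((ιL p : E2) 0, (ιL p : E2) 1) = p
    rw [ιL_apply_coord, ιL_apply_coord]
    simp
  conv_lhs => rw [← h]
  exact MeasurableEquiv.symm_apply_apply _ _

lemma norm_ιL (p : ℝ × ℝ) : ‖ιL p‖ = Real.sqrt (p.1 ^ 2 + p.2 ^ 2) := by
  rw [EuclideanSpace.norm_eq]
  congr 1
  rw [Fin.sum_univ_two, ιL_apply_coord, ιL_apply_coord]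
  simp [sq_abs]

/-- the unit vector at angle φ -/
def cv (φ : ℝ) : E2 := ιL (Real.cos φ, Real.sin φ)

lemma norm_cv (φ : ℝ) : ‖cv φ‖ = 1 := by
  rw [cv, norm_ιL]
  simp [Real.cos_sq_add_sin_sq]

lemma norm_smul_cv (r φ : ℝ) (hr : 0 ≤ r) : ‖r • cv φ‖ = r := by
  rw [norm_smul, norm_cv, Real.norm_of_nonneg hr, mul_one]

lemma smul_cv (r φ : ℝ) : r • cv φ = ιL (r * Real.cos φ, r * Real.sin φ) := by
  rw [cv, ← ContinuousLinearMap.map_smul, Prod.smul_mk, smul_eq_mul, smul_eq_mul]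

lemma measurable_smul_cv : Measurable (fun q : ℝ × ℝ => q.1 • cv q.2) := by
  apply Continuous.measurable
  apply Continuous.smul continuous_fst
  exact ιL.continuous.comp
    ((Real.continuous_cos.comp continuous_snd).prodMk (Real.continuous_sin.comp continuous_snd))

theorem my_lintegral_comp_polarCoord_symm (f : ℝ × ℝ → ENNReal) :
    (∫⁻ p in polarCoord.target, ENNReal.ofReal p.1 * f (polarCoord.symm p)) = ∫⁻ p, f p := by
  set B : ℝ × ℝ → ℝ × ℝ →L[ℝ] ℝ × ℝ := fun p =>
    LinearMap.toContinuousLinearMap (Matrix.toLin (Module.Basis.finTwoProd ℝ) (Module.Basis.finTwoProd ℝ)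
      !![Real.cos p.2, -p.1 * Real.sin p.2; Real.sin p.2, p.1 * Real.cos p.2])
  have A : ∀ p ∈ polarCoord.target, HasFDerivWithinAt polarCoord.symm (B p) polarCoord.target p :=
    fun p _ => (hasFDerivAt_polarCoord_symm p).hasFDerivWithinAt
  have B_det : ∀ p, (B p).det = p.1 := by
    intro p
    conv_rhs => rw [← one_mul p.1, ← cos_sq_add_sin_sq p.2]
    simp only [B, neg_mul, LinearMap.det_toContinuousLinearMap, LinearMap.det_toLin,
      Matrix.det_fin_two_of, sub_neg_eq_add]
    ring
  have hinj : Set.InjOn polarCoord.symm polarCoord.target :=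
    polarCoord.symm.injOn
  have himg : polarCoord.symm '' polarCoord.target = polarCoord.source :=
    polarCoord.symm_image_target_eq_source
  calc ∫⁻ p in polarCoord.target, ENNReal.ofReal p.1 * f (polarCoord.symm p)
      = ∫⁻ p in polarCoord.target, ENNReal.ofReal |(B p).det| * f (polarCoord.symm p) := by
        apply setLIntegral_congr_fun polarCoord.open_target.measurableSet
        intro p hp
        dsimp only
        rw [B_det, abs_of_pos hp.1]
    _ = ∫⁻ p in polarCoord.symm '' polarCoord.target, f p := by
        rw [lintegral_image_eq_lintegral_abs_det_fderiv_mul volume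
          polarCoord.open_target.measurableSet A hinj f]
    _ = ∫⁻ p in polarCoord.source, f p := by rw [himg]
    _ = ∫⁻ p, f p := by
        rw [setLIntegral_congr polarCoord_source_ae_eq_univ, setLIntegral_univ]

/-- Polar coordinates for lower integrals on the Euclidean plane. -/
theorem polar_lintegral (f : E2 → ENNReal) (hf : Measurable f) :
    ∫⁻ y, f y = ∫⁻ φ in Set.Ioo (-π) π, ∫⁻ r in Set.Ioi (0:ℝ),
      ENNReal.ofReal r * f (r • cv φ) := by
  have h1 : ∫⁻ y, f y = ∫⁻ p : ℝ × ℝ, f (eE.symm p) :=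
    ((eE_mp.symm).lintegral_comp_emb eE.symm.measurableEmbedding f).symm
  have h2 : ∀ p : ℝ × ℝ, f (eE.symm (polarCoord.symm p)) = f (p.1 • cv p.2) := by
    intro p
    rw [eE_symm_eq, polarCoord_symm_apply, smul_cv]
  rw [h1, ← my_lintegral_comp_polarCoord_symm (fun p => f (eE.symm p))]
  have hmeas : Measurable fun p : ℝ × ℝ => ENNReal.ofReal p.1 * f (p.1 • cv p.2) :=
    (ENNReal.measurable_ofReal.comp measurable_fst).mul (hf.comp measurable_smul_cv)
  calc ∫⁻ p in polarCoord.target, ENNReal.ofReal p.1 * f (eE.symm (polarCoord.symm p))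
      = ∫⁻ p in polarCoord.target, ENNReal.ofReal p.1 * f (p.1 • cv p.2) := by
        apply lintegral_congr (fun p => by rw [h2])
    _ = ∫⁻ p in Set.Ioi (0:ℝ) ×ˢ Set.Ioo (-π) π, ENNReal.ofReal p.1 * f (p.1 • cv p.2) := by
        rw [polarCoord_target]
    _ = ∫⁻ r in Set.Ioi (0:ℝ), ∫⁻ φ in Set.Ioo (-π) π, ENNReal.ofReal r * f (r • cv φ) := by
        rw [MeasureTheory.Measure.volume_eq_prod, ← Measure.prod_restrict]
        exact lintegral_prod _ hmeas.aemeasurable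
    _ = ∫⁻ φ in Set.Ioo (-π) π, ∫⁻ r in Set.Ioi (0:ℝ), ENNReal.ofReal r * f (r • cv φ) := by
        exact lintegral_lintegral_swap hmeas.aemeasurable



lemma my_oneD (κ : ℝ) (hκ : 2 ≤ κ) (g : ℝ → ℂ) (hg : Differentiable ℝ g)
    (G : ℝ → ℝ) (hGm : Measurable G) (hG0 : ∀ s, 0 ≤ G s) (hGb : ∀ s, ‖deriv g s‖ ≤ G s)
    (hA : IntegrableOn (fun s => s * G s ^ 2) (Set.Ioc 2⁻¹ κ))
    (hB : IntegrableOn (fun r => ‖g r‖ ^ 2) (Set.Ioc 2⁻¹ 1)) :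
    ∀ R ∈ Set.Ioc (2⁻¹:ℝ) κ,
      ‖g R‖ ^ 2 ≤ 4 * (∫ r in Set.Ioc (2⁻¹:ℝ) 1, ‖g r‖ ^ 2)
        + 2 * Real.log (2*κ) * ∫ s in Set.Ioc (2⁻¹:ℝ) κ, s * G s ^ 2 := by
  have hhalf : (0:ℝ) < 2⁻¹ := by norm_num
  have hhκ : (2⁻¹:ℝ) ≤ κ := by linarith
  set A : ℝ := ∫ s in Set.Ioc (2⁻¹:ℝ) κ, s * G s ^ 2 with hAdef
  set B : ℝ := ∫ r in Set.Ioc (2⁻¹:ℝ) 1, ‖g r‖ ^ 2 with hBdef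
  set L : ℝ := Real.log (2*κ) with hLdef
  have hL : 0 < L := Real.log_pos (by linarith)
  have hA0 : 0 ≤ A := setIntegral_nonneg measurableSet_Ioc
    (fun s hs => mul_nonneg (by linarith [hs.1]) (sq_nonneg _))
  -- integral of s⁻¹
  have hIinvInt : IntegrableOn (fun s : ℝ => s⁻¹) (Set.Ioc 2⁻¹ κ) := by
    have : IntervalIntegrable (fun s : ℝ => s⁻¹) volume 2⁻¹ κ := by
      apply intervalIntegral.intervalIntegrable_inv (f := fun x : ℝ => x) ?_ continuousOn_id
      intro x hx
      rw [Set.uIcc_of_le hhκ] at hx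
      have h1 := hx.1
      intro h
      rw [h] at h1
      linarith
    rwa [intervalIntegrable_iff_integrableOn_Ioc_of_le hhκ] at this
  have hIinv : ∫ s in Set.Ioc (2⁻¹:ℝ) κ, s⁻¹ = L := by
    rw [← intervalIntegral.integral_of_le hhκ, integral_inv_of_pos hhalf (by linarith)]
    rw [hLdef]
    congr 1
    field_simp
  -- integrability of G
  have hGint : IntegrableOn G (Set.Ioc 2⁻¹ κ) := by
    apply Integrable.mono' ((hIinvInt.const_mul 1).add hA)
    · exact (hGm.aestronglyMeasurable).restrict
    · filter_upwards [ae_restrict_mem measurableSet_Ioc] with s hs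
      have hs0 : (0:ℝ) < s := lt_trans hhalf hs.1
      rw [Real.norm_of_nonneg (hG0 s)]
      have h1 : s * s⁻¹ = 1 := mul_inv_cancel₀ (ne_of_gt hs0)
      simp only [Pi.add_apply]
      rw [← sub_nonneg]
      have h4 : 1 * s⁻¹ + s * G s ^ 2 - G s = (1 + s ^ 2 * G s ^ 2 - s * G s) / s := by
        field_simp
      rw [h4]
      apply div_nonneg _ hs0.le
      nlinarith [sq_nonneg (1 - s * G s)]
  have hIG0 : 0 ≤ ∫ s in Set.Ioc (2⁻¹:ℝ) κ, G s :=
    setIntegral_nonneg measurableSet_Ioc (fun s _ => hG0 s)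
  -- key estimate with parameter l
  have key : ∀ l : ℝ, 0 < l →
      (∫ s in Set.Ioc (2⁻¹:ℝ) κ, G s) ≤ (l * L + A / l) / 2 := by
    intro l hl
    have hpt : ∀ s ∈ Set.Ioc (2⁻¹:ℝ) κ, G s ≤ (l * s⁻¹ + s * G s ^ 2 / l) / 2 := by
      intro s hs
      have hs0 : (0:ℝ) < s := lt_trans hhalf hs.1
      have h1 : s * s⁻¹ = 1 := mul_inv_cancel₀ (ne_of_gt hs0)
      have key2 : 2 * l * s * G s ≤ l ^ 2 + s ^ 2 * G s ^ 2 := by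
        nlinarith [sq_nonneg (l - s * G s)]
      have he : (l * s⁻¹ + s * G s ^ 2 / l) / 2 = (l ^ 2 + s ^ 2 * G s ^ 2) / (2 * l * s) := by
        field_simp
      rw [he, le_div_iff₀ (by positivity)]
      nlinarith [key2]
    have hint : IntegrableOn (fun s : ℝ => (l * s⁻¹ + s * G s ^ 2 / l) / 2)
        (Set.Ioc 2⁻¹ κ) := (((hIinvInt.const_mul l).add (hA.div_const l)).div_const 2)
    calc (∫ s in Set.Ioc (2⁻¹:ℝ) κ, G s)
        ≤ ∫ s in Set.Ioc (2⁻¹:ℝ) κ, (l * s⁻¹ + s * G s ^ 2 / l) / 2 :=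
          setIntegral_mono_on hGint hint measurableSet_Ioc hpt
      _ = (l * L + A / l) / 2 := by
          rw [integral_div, integral_add (hIinvInt.const_mul l) (hA.div_const l),
            integral_const_mul, integral_div, hIinv]
  -- conclude the sqrt bound
  have hIG : (∫ s in Set.Ioc (2⁻¹:ℝ) κ, G s) ≤ Real.sqrt (L * A) := by
    rcases eq_or_lt_of_le hA0 with hA0' | hA0'
    · have h0 : Real.sqrt (L * A) = 0 := by rw [← hA0', mul_zero, Real.sqrt_zero]
      rw [h0]
      apply le_of_forall_pos_le_add
      intro ε hε
      have := key (2 * ε / L) (by positivity)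
      rw [← hA0'] at this
      calc (∫ s in Set.Ioc (2⁻¹:ℝ) κ, G s) ≤ (2 * ε / L * L + 0 / (2 * ε / L)) / 2 := this
        _ = ε := by field_simp; ring
        _ ≤ 0 + ε := by linarith
    · set t : ℝ := Real.sqrt (L * A) with htdef
      have ht2 : t ^ 2 = L * A := Real.sq_sqrt (by positivity)
      have ht : 0 < t := Real.sqrt_pos.mpr (by positivity)
      have := key (t / L) (by positivity)
      calc (∫ s in Set.Ioc (2⁻¹:ℝ) κ, G s) ≤ (t / L * L + A / (t / L)) / 2 := this
        _ = t := by
            have h1 : t / L * L = t := by field_simp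
            have h2 : A / (t / L) = t := by
              rw [div_div_eq_mul_div, div_eq_iff (ne_of_gt ht)]
              nlinarith [ht2]
            rw [h1, h2]; ring
  -- integrability of ‖deriv g‖
  have hdm : Measurable (deriv g) := measurable_deriv g
  have hderint : IntegrableOn (fun s => ‖deriv g s‖) (Set.Ioc 2⁻¹ κ) := by
    apply Integrable.mono' hGint hdm.norm.aestronglyMeasurable.restrict
    filter_upwards with s
    rw [Real.norm_of_nonneg (norm_nonneg _)]
    exact hGb s
  -- pointwise bound for all R, r
  have step : ∀ R ∈ Set.Ioc (2⁻¹:ℝ) κ, ∀ r ∈ Set.Ioc (2⁻¹:ℝ) 1,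
      ‖g R‖ ^ 2 ≤ 2 * ‖g r‖ ^ 2 + 2 * (L * A) := by
    intro R hR r hr
    have hsub : Set.uIoc r R ⊆ Set.Ioc 2⁻¹ κ := by
      rw [Set.uIoc]
      apply Set.Ioc_subset_Ioc
      · exact le_min hr.1.le hR.1.le
      · exact max_le (hr.2.trans (by linarith)) hR.2
    have hii : IntervalIntegrable (deriv g) volume r R := by
      rw [intervalIntegrable_iff]
      exact Integrable.mono' (hderint.mono_set hsub)
        (hdm.aestronglyMeasurable.restrict)
        (Filter.Eventually.of_forall (fun s => le_refl _))
    have hftc : ∫ t in r..R, deriv g t = g R - g r :=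
      intervalIntegral.integral_deriv_eq_sub (fun x _ => hg x) hii
    have hnorm : ‖g R - g r‖ ≤ Real.sqrt (L * A) := by
      rw [← hftc]
      calc ‖∫ t in r..R, deriv g t‖ ≤ ∫ t in Set.uIoc r R, ‖deriv g t‖ :=
            intervalIntegral.norm_integral_le_integral_norm_uIoc
        _ ≤ ∫ t in Set.Ioc (2⁻¹:ℝ) κ, ‖deriv g t‖ := by
            apply setIntegral_mono_set hderint
            · filter_upwards with s using norm_nonneg _
            · exact HasSubset.Subset.eventuallyLE hsub
        _ ≤ ∫ s in Set.Ioc (2⁻¹:ℝ) κ, G s :=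
            setIntegral_mono_on hderint hGint measurableSet_Ioc (fun s _ => hGb s)
        _ ≤ Real.sqrt (L * A) := hIG
    have htri : ‖g R‖ ≤ ‖g r‖ + Real.sqrt (L * A) := by
      calc ‖g R‖ = ‖g r + (g R - g r)‖ := by ring_nf
        _ ≤ ‖g r‖ + ‖g R - g r‖ := norm_add_le _ _
        _ ≤ ‖g r‖ + Real.sqrt (L * A) := by linarith
    have hsq : Real.sqrt (L * A) ^ 2 = L * A := Real.sq_sqrt (by positivity)
    nlinarith [norm_nonneg (g R), norm_nonneg (g r), Real.sqrt_nonneg (L * A),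
      sq_nonneg (‖g r‖ - Real.sqrt (L * A))]
  -- averaging over r
  intro R hR
  have hconst : ∫ _r in Set.Ioc (2⁻¹:ℝ) 1, ‖g R‖ ^ 2 = ‖g R‖ ^ 2 / 2 := by
    rw [setIntegral_const, Real.volume_real_Ioc_of_le (by norm_num)]
    norm_num
    ring
  have hmono : ∫ _r in Set.Ioc (2⁻¹:ℝ) 1, ‖g R‖ ^ 2 ≤
      ∫ r in Set.Ioc (2⁻¹:ℝ) 1, (2 * ‖g r‖ ^ 2 + 2 * (L * A)) := by
    apply setIntegral_mono_on
    · exact integrableOn_const (by rw [Real.volume_Ioc]; exact ENNReal.ofReal_ne_top)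
    · exact (hB.const_mul 2).add (integrableOn_const
        (by rw [Real.volume_Ioc]; exact ENNReal.ofReal_ne_top))
    · exact measurableSet_Ioc
    · exact fun r hr => step R hR r hr
  have hrhs : ∫ r in Set.Ioc (2⁻¹:ℝ) 1, (2 * ‖g r‖ ^ 2 + 2 * (L * A))
      = 2 * B + L * A := by
    rw [integral_add (hB.const_mul 2) (integrableOn_const
      (by rw [Real.volume_Ioc]; exact ENNReal.ofReal_ne_top))]
    have e1 : ∫ a in Set.Ioc (2⁻¹:ℝ) 1, 2 * ‖g a‖ ^ 2 = 2 * B := integral_const_mul 2 _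
    have e2 : ∫ _a in Set.Ioc (2⁻¹:ℝ) 1, 2 * (L * A) = L * A := by
      rw [setIntegral_const, Real.volume_real_Ioc_of_le (by norm_num), smul_eq_mul]
      have h12 : (1 - 2⁻¹ : ℝ) = 1/2 := by norm_num
      rw [h12]; ring
    rw [e1, e2]
  rw [hconst, hrhs] at hmono
  linarith

lemma ring_lintegral (f : E2 → ENNReal) (hf : Measurable f) (a b : ℝ) (ha : 0 < a) :
    ∫⁻ y in {y : E2 | ‖y‖ ∈ Set.Ioc a b}, f y
      = ∫⁻ φ in Set.Ioo (-π) π, ∫⁻ r in Set.Ioc a b, ENNReal.ofReal r * f (r • cv φ) := by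
  have hS : MeasurableSet {y : E2 | ‖y‖ ∈ Set.Ioc a b} :=
    (continuous_norm.measurable) measurableSet_Ioc
  have h1 : ∫⁻ y in {y : E2 | ‖y‖ ∈ Set.Ioc a b}, f y
      = ∫⁻ y, ({y : E2 | ‖y‖ ∈ Set.Ioc a b}).indicator f y :=
    (lintegral_indicator hS f).symm
  rw [h1, polar_lintegral _ (hf.indicator hS)]
  apply lintegral_congr
  intro φ
  have key : ∀ r : ℝ, (Set.Ioi (0:ℝ)).indicator
      (fun r => ENNReal.ofReal r * ({y : E2 | ‖y‖ ∈ Set.Ioc a b}).indicator f (r • cv φ)) r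
      = (Set.Ioc a b).indicator (fun r => ENNReal.ofReal r * f (r • cv φ)) r := by
    intro r
    by_cases hr : r ∈ Set.Ioc a b
    · have hr0 : (0:ℝ) < r := lt_trans ha hr.1
      rw [Set.indicator_of_mem (Set.mem_Ioi.mpr hr0), Set.indicator_of_mem hr,
        Set.indicator_of_mem]
      show ‖r • cv φ‖ ∈ Set.Ioc a b
      rw [norm_smul_cv r φ hr0.le]
      exact hr
    · rw [Set.indicator_of_notMem hr]
      by_cases hr0 : r ∈ Set.Ioi (0:ℝ)
      · rw [Set.indicator_of_mem hr0, Set.indicator_of_notMem, mul_zero]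
        show ¬ (‖r • cv φ‖ ∈ Set.Ioc a b)
        rw [norm_smul_cv r φ (le_of_lt hr0)]
        exact hr
      · rw [Set.indicator_of_notMem hr0]
  calc ∫⁻ r in Set.Ioi (0:ℝ),
        ENNReal.ofReal r * ({y : E2 | ‖y‖ ∈ Set.Ioc a b}).indicator f (r • cv φ)
      = ∫⁻ r, (Set.Ioi (0:ℝ)).indicator
          (fun r => ENNReal.ofReal r
            * ({y : E2 | ‖y‖ ∈ Set.Ioc a b}).indicator f (r • cv φ)) r :=
        (lintegral_indicator measurableSet_Ioi _).symm
    _ = ∫⁻ r, (Set.Ioc a b).indicator (fun r => ENNReal.ofReal r * f (r • cv φ)) r :=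
        lintegral_congr key
    _ = ∫⁻ r in Set.Ioc a b, ENNReal.ofReal r * f (r • cv φ) :=
        lintegral_indicator measurableSet_Ioc _


set_option maxHeartbeats 1000000 in
theorem main :
    ∃ C : ℝ, 0 < C ∧
      ∀ κ : ℝ, 2 ≤ κ →
      ∀ v : EuclideanSpace ℝ (Fin 2) → ℂ,
        Differentiable ℝ v →
        MemLp v 2 (volume : Measure (EuclideanSpace ℝ (Fin 2))) →
        MemLp (fun y => fderiv ℝ v y) 2 (volume : Measure (EuclideanSpace ℝ (Fin 2))) →
        ∫ y in {y : EuclideanSpace ℝ (Fin 2) | ‖y‖ ≤ κ}, ‖v y‖ ^ 2 ≤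
          C * κ ^ 2 * Real.log κ *
            ((∫ y : EuclideanSpace ℝ (Fin 2), ‖fderiv ℝ v y‖ ^ 2) +
              ∫ y in {y : EuclideanSpace ℝ (Fin 2) | ‖y‖ ≤ 1},
                ‖v y‖ ^ 2 * Real.exp (-‖y‖)) := by
  refine ⟨40, by norm_num, ?_⟩
  intro κ hκ v hv hv2 hdv2
  have hκ0 : (0:ℝ) < κ := by linarith
  have hvc : Continuous v := hv.continuous
  have hfdm : Measurable (fun y : E2 => fderiv ℝ v y) := measurable_fderiv ℝ v
  set nn : E2 → ENNReal := fun y => ENNReal.ofReal (‖v y‖ ^ 2) with hnndef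
  set dnn : E2 → ENNReal := fun y => ENNReal.ofReal (‖fderiv ℝ v y‖ ^ 2) with hdnndef
  set D : ENNReal := ∫⁻ y, dnn y with hDdef
  set W : ENNReal := ∫⁻ y in {y : E2 | ‖y‖ ≤ 1}, ENNReal.ofReal (‖v y‖ ^ 2 * Real.exp (-‖y‖))
    with hWdef
  have hnnm : Measurable nn := ENNReal.measurable_ofReal.comp (hvc.norm.pow 2).measurable
  have hdnnm : Measurable dnn := ENNReal.measurable_ofReal.comp (hfdm.norm.pow_const 2)
  have hwm : Measurable (fun y : E2 => ENNReal.ofReal (‖v y‖ ^ 2 * Real.exp (-‖y‖))) :=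
    ENNReal.measurable_ofReal.comp
      ((hvc.norm.pow 2).mul ((Real.continuous_exp.comp continuous_norm.neg))).measurable
  have hv2' : Integrable (fun y : E2 => ‖v y‖ ^ 2) := hv2.norm.integrable_sq
  have hdv2' : Integrable (fun y : E2 => ‖fderiv ℝ v y‖ ^ 2) := hdv2.norm.integrable_sq
  have hNfin : (∫⁻ y, nn y) < ⊤ := hv2'.lintegral_lt_top
  have hDfin : D < ⊤ := hdv2'.lintegral_lt_top
  have hball1 : MeasurableSet {y : E2 | ‖y‖ ≤ 1} :=
    measurableSet_le continuous_norm.measurable measurable_const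
  -- W is finite
  have hWle : W ≤ ∫⁻ y, nn y := by
    calc W ≤ ∫⁻ y in {y : E2 | ‖y‖ ≤ 1}, nn y := by
          apply lintegral_mono_ae
          filter_upwards with y
          apply ENNReal.ofReal_le_ofReal
          have h1 : Real.exp (-‖y‖) ≤ 1 := by
            rw [← Real.exp_zero]
            exact Real.exp_le_exp.mpr (neg_nonpos.mpr (norm_nonneg y))
          nlinarith [sq_nonneg ‖v y‖, norm_nonneg (v y)]
      _ ≤ ∫⁻ y, nn y := setLIntegral_le_lintegral _ _
  have hWfin : W < ⊤ := lt_of_le_of_lt hWle hNfin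
  -- pointwise weighted bound on the unit ball
  have hwb : ∀ y : E2, ‖y‖ ≤ 1 →
      nn y ≤ ENNReal.ofReal (Real.exp 1) * ENNReal.ofReal (‖v y‖ ^ 2 * Real.exp (-‖y‖)) := by
    intro y hy
    rw [← ENNReal.ofReal_mul (Real.exp_nonneg 1)]
    apply ENNReal.ofReal_le_ofReal
    have h1 : (1:ℝ) ≤ Real.exp 1 * Real.exp (-‖y‖) := by
      rw [← Real.exp_add]
      calc (1:ℝ) = Real.exp 0 := (Real.exp_zero).symm
        _ ≤ Real.exp (1 + -‖y‖) := Real.exp_le_exp.mpr (by linarith)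
    calc ‖v y‖ ^ 2 = ‖v y‖ ^ 2 * 1 := by ring
      _ ≤ ‖v y‖ ^ 2 * (Real.exp 1 * Real.exp (-‖y‖)) := by
          exact mul_le_mul_of_nonneg_left h1 (sq_nonneg _)
      _ = Real.exp 1 * (‖v y‖ ^ 2 * Real.exp (-‖y‖)) := by ring
  -- small ball bound
  have hsmall : ∫⁻ y in {y : E2 | ‖y‖ ≤ 2⁻¹}, nn y ≤ ENNReal.ofReal (Real.exp 1) * W := by
    calc ∫⁻ y in {y : E2 | ‖y‖ ≤ 2⁻¹}, nn y
        ≤ ∫⁻ y in {y : E2 | ‖y‖ ≤ 1}, nn y := by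
          apply lintegral_mono_set
          intro y hy
          simp only [Set.mem_setOf_eq] at hy ⊢
          exact le_trans hy (by norm_num)
      _ ≤ ∫⁻ y in {y : E2 | ‖y‖ ≤ 1},
            ENNReal.ofReal (Real.exp 1) * ENNReal.ofReal (‖v y‖ ^ 2 * Real.exp (-‖y‖)) := by
          apply lintegral_mono_ae
          filter_upwards [ae_restrict_mem hball1] with y hy
          exact hwb y hy
      _ = ENNReal.ofReal (Real.exp 1) * W := lintegral_const_mul _ hwm
  -- the gradient norm along rays
  set G : ℝ → ℝ → ℝ := fun φ s => ‖fderiv ℝ v (s • cv φ)‖ with hGdef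
  set g : ℝ → ℝ → ℂ := fun φ s => v (s • cv φ) with hgdef
  have hGm : ∀ φ, Measurable (G φ) := by
    intro φ
    apply Measurable.norm
    exact hfdm.comp (measurable_id.smul measurable_const)
  have hgm : ∀ φ, Measurable (fun s => ‖g φ s‖ ^ 2) := by
    intro φ
    exact ((hvc.comp (continuous_id.smul continuous_const)).norm.pow 2).measurable
  -- ennreal ray integrals
  set Abar : ℝ → ENNReal := fun φ => ∫⁻ s in Set.Ioc (2⁻¹:ℝ) κ,
    ENNReal.ofReal (s * G φ s ^ 2) with hAbardef
  set Bbar : ℝ → ENNReal := fun φ => ∫⁻ r in Set.Ioc (2⁻¹:ℝ) 1,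
    ENNReal.ofReal (‖g φ r‖ ^ 2) with hBbardef
  -- measurability in (φ, s) jointly
  have hjm : Measurable (fun q : ℝ × ℝ => q.2 • cv q.1) :=
    measurable_smul_cv.comp measurable_swap
  have hAbarm : Measurable Abar := by
    apply Measurable.lintegral_prod_right (f := fun φ s => ENNReal.ofReal (s * G φ s ^ 2))
    apply ENNReal.measurable_ofReal.comp
    exact measurable_snd.mul (((hfdm.comp hjm).norm).pow_const 2)
  have hBbarm : Measurable Bbar := by
    apply Measurable.lintegral_prod_right (f := fun φ r => ENNReal.ofReal (‖g φ r‖ ^ 2))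
    apply ENNReal.measurable_ofReal.comp
    exact ((hvc.measurable.comp hjm).norm).pow_const 2
  -- pointwise identities on positive radii
  have hAbar_eq : ∀ φ, ∀ s ∈ Set.Ioc (2⁻¹:ℝ) κ,
      ENNReal.ofReal (s * G φ s ^ 2) = ENNReal.ofReal s * dnn (s • cv φ) := by
    intro φ s hs
    have hs0 : (0:ℝ) ≤ s := by
      have := hs.1; norm_num at this ⊢; linarith
    rw [ENNReal.ofReal_mul hs0]
  -- the φ-integral of Abar is at most D
  have hAd : ∫⁻ φ in Set.Ioo (-π) π, Abar φ ≤ D := by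
    calc ∫⁻ φ in Set.Ioo (-π) π, Abar φ
        = ∫⁻ φ in Set.Ioo (-π) π, ∫⁻ s in Set.Ioc (2⁻¹:ℝ) κ,
            ENNReal.ofReal s * dnn (s • cv φ) := by
          apply lintegral_congr
          intro φ
          exact setLIntegral_congr_fun measurableSet_Ioc
            (hAbar_eq φ)
      _ ≤ ∫⁻ φ in Set.Ioo (-π) π, ∫⁻ s in Set.Ioi (0:ℝ),
            ENNReal.ofReal s * dnn (s • cv φ) := by
          apply lintegral_mono
          intro φ
          apply lintegral_mono_set
          intro s hs
          exact lt_trans (by norm_num) hs.1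
      _ = D := (polar_lintegral dnn hdnnm).symm
  -- the φ-integral of Bbar
  have hring1 : ∫⁻ y in {y : E2 | ‖y‖ ∈ Set.Ioc (2⁻¹:ℝ) 1}, nn y
      = ∫⁻ φ in Set.Ioo (-π) π, ∫⁻ r in Set.Ioc (2⁻¹:ℝ) 1,
          ENNReal.ofReal r * nn (r • cv φ) :=
    ring_lintegral nn hnnm 2⁻¹ 1 (by norm_num)
  have hann1W : ∫⁻ y in {y : E2 | ‖y‖ ∈ Set.Ioc (2⁻¹:ℝ) 1}, nn y
      ≤ ENNReal.ofReal (Real.exp 1) * W := by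
    calc ∫⁻ y in {y : E2 | ‖y‖ ∈ Set.Ioc (2⁻¹:ℝ) 1}, nn y
        ≤ ∫⁻ y in {y : E2 | ‖y‖ ≤ 1}, nn y := by
          apply lintegral_mono_set
          intro y hy
          exact hy.2
      _ ≤ ∫⁻ y in {y : E2 | ‖y‖ ≤ 1},
            ENNReal.ofReal (Real.exp 1) * ENNReal.ofReal (‖v y‖ ^ 2 * Real.exp (-‖y‖)) := by
          apply lintegral_mono_ae
          filter_upwards [ae_restrict_mem hball1] with y hy
          exact hwb y hy
      _ = ENNReal.ofReal (Real.exp 1) * W := lintegral_const_mul _ hwm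
  have hBw : ∫⁻ φ in Set.Ioo (-π) π, Bbar φ ≤ 2 * (ENNReal.ofReal (Real.exp 1) * W) := by
    have h2r : ∀ φ, Bbar φ ≤ 2 * ∫⁻ r in Set.Ioc (2⁻¹:ℝ) 1,
        ENNReal.ofReal r * nn (r • cv φ) := by
      intro φ
      rw [← lintegral_const_mul 2]
      · apply lintegral_mono_ae
        filter_upwards [ae_restrict_mem measurableSet_Ioc] with r hr
        have h1 : (1:ENNReal) ≤ 2 * ENNReal.ofReal r := by
          rw [show ((2:ENNReal)) = ENNReal.ofReal (2:ℝ) by simp,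
            ← ENNReal.ofReal_mul (by norm_num),
            show ((1:ENNReal)) = ENNReal.ofReal (1:ℝ) by simp]
          apply ENNReal.ofReal_le_ofReal
          nlinarith [hr.1]
        calc ENNReal.ofReal (‖g φ r‖ ^ 2) = 1 * nn (r • cv φ) := (one_mul _).symm
          _ ≤ (2 * ENNReal.ofReal r) * nn (r • cv φ) := mul_le_mul_left h1 _
          _ = 2 * (ENNReal.ofReal r * nn (r • cv φ)) := by rw [mul_assoc]
      · exact (ENNReal.measurable_ofReal.comp measurable_id).mul
          (hnnm.comp (measurable_id.smul measurable_const))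
    calc ∫⁻ φ in Set.Ioo (-π) π, Bbar φ
        ≤ ∫⁻ φ in Set.Ioo (-π) π, 2 * ∫⁻ r in Set.Ioc (2⁻¹:ℝ) 1,
            ENNReal.ofReal r * nn (r • cv φ) := lintegral_mono (fun φ => h2r φ)
      _ = 2 * ∫⁻ φ in Set.Ioo (-π) π, ∫⁻ r in Set.Ioc (2⁻¹:ℝ) 1,
            ENNReal.ofReal r * nn (r • cv φ) := by
          apply lintegral_const_mul
          apply Measurable.lintegral_prod_right
            (f := fun φ r => ENNReal.ofReal r * nn (r • cv φ))
          exact (ENNReal.measurable_ofReal.comp measurable_snd).mul (hnnm.comp hjm)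
      _ ≤ 2 * (ENNReal.ofReal (Real.exp 1) * W) := by
          rw [← hring1]
          exact mul_le_mul_right hann1W 2
  -- a.e. finiteness in φ
  have hAfin : ∀ᵐ φ ∂(volume.restrict (Set.Ioo (-π) π)), Abar φ < ⊤ :=
    ae_lt_top hAbarm (ne_of_lt (lt_of_le_of_lt hAd hDfin))
  have hBWfin : 2 * (ENNReal.ofReal (Real.exp 1) * W) < ⊤ := by
    apply ENNReal.mul_lt_top
    · exact (by norm_num)
    · exact ENNReal.mul_lt_top ENNReal.ofReal_lt_top hWfin
  have hBfin : ∀ᵐ φ ∂(volume.restrict (Set.Ioo (-π) π)), Bbar φ < ⊤ :=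
    ae_lt_top hBbarm (ne_of_lt (lt_of_le_of_lt hBw hBWfin))
  -- log comparison
  have hlogκ0 : 0 < Real.log κ := Real.log_pos (by linarith)
  have hL2 : Real.log (2*κ) ≤ 2 * Real.log κ := by
    rw [Real.log_mul (by norm_num) (ne_of_gt hκ0)]
    have := Real.log_le_log (by norm_num : (0:ℝ) < 2) hκ
    linarith
  -- the key a.e. pointwise-in-φ bound
  have hkey : ∀ᵐ φ ∂(volume.restrict (Set.Ioo (-π) π)),
      (∫⁻ r in Set.Ioc (2⁻¹:ℝ) κ, ENNReal.ofReal r * nn (r • cv φ))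
        ≤ ENNReal.ofReal (κ^2) *
            (4 * Bbar φ + ENNReal.ofReal (4 * Real.log κ) * Abar φ) := by
    filter_upwards [hAfin, hBfin] with φ hAφ hBφ
    have hgc : Continuous (g φ) := hvc.comp (continuous_id.smul continuous_const)
    have hAint : IntegrableOn (fun s => s * G φ s ^ 2) (Set.Ioc (2⁻¹:ℝ) κ) := by
      constructor
      · exact (measurable_id.mul ((hGm φ).pow_const 2)).aestronglyMeasurable
      · show (∫⁻ s in Set.Ioc (2⁻¹:ℝ) κ, (‖s * G φ s ^ 2‖ₑ : ENNReal)) < ⊤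
        refine lt_of_le_of_lt (le_of_eq ?_) hAφ
        apply setLIntegral_congr_fun measurableSet_Ioc
        intro s hs
        dsimp only
        rw [← Real.enorm_eq_ofReal (mul_nonneg (by nlinarith [hs.1]) (sq_nonneg _))]
    have hBint : IntegrableOn (fun r => ‖g φ r‖ ^ 2) (Set.Ioc (2⁻¹:ℝ) 1) := by
      constructor
      · exact (hgm φ).aestronglyMeasurable
      · show (∫⁻ r in Set.Ioc (2⁻¹:ℝ) 1, (‖‖g φ r‖ ^ 2‖ₑ : ENNReal)) < ⊤
        refine lt_of_le_of_lt (le_of_eq ?_) hBφ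
        apply setLIntegral_congr_fun measurableSet_Ioc
        intro r hr
        dsimp only
        rw [← Real.enorm_eq_ofReal (sq_nonneg _)]
    have hgd : Differentiable ℝ (g φ) := hv.comp (differentiable_id.smul_const (cv φ))
    have hder : ∀ s, ‖deriv (g φ) s‖ ≤ G φ s := by
      intro s
      have hcurve : HasDerivAt (fun t : ℝ => t • cv φ) (cv φ) s := by
        simpa using (hasDerivAt_id s).smul_const (cv φ)
      have h2 : HasDerivAt (g φ) ((fderiv ℝ v (s • cv φ)) (cv φ)) s :=
        ((hv (s • cv φ)).hasFDerivAt).comp_hasDerivAt s hcurve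
      rw [h2.deriv]
      calc ‖(fderiv ℝ v (s • cv φ)) (cv φ)‖
          ≤ ‖fderiv ℝ v (s • cv φ)‖ * ‖cv φ‖ := (fderiv ℝ v (s • cv φ)).le_opNorm (cv φ)
        _ = G φ s := by rw [norm_cv, mul_one]
    have hb := my_oneD κ hκ (g φ) hgd (G φ) (hGm φ) (fun s => norm_nonneg _) hder hAint hBint
    set Ar : ℝ := ∫ s in Set.Ioc (2⁻¹:ℝ) κ, s * G φ s ^ 2 with hArdef
    set Br : ℝ := ∫ r in Set.Ioc (2⁻¹:ℝ) 1, ‖g φ r‖ ^ 2 with hBrdef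
    have hAr0 : 0 ≤ Ar := setIntegral_nonneg measurableSet_Ioc
      (fun s hs => mul_nonneg (by nlinarith [hs.1]) (sq_nonneg _))
    have hBr0 : 0 ≤ Br := setIntegral_nonneg measurableSet_Ioc (fun s _ => sq_nonneg _)
    have hAeq : ENNReal.ofReal Ar = Abar φ := by
      apply ofReal_integral_eq_lintegral_ofReal hAint
      filter_upwards [ae_restrict_mem measurableSet_Ioc] with s hs
      exact mul_nonneg (by nlinarith [hs.1]) (sq_nonneg _)
    have hBeq : ENNReal.ofReal Br = Bbar φ := by
      apply ofReal_integral_eq_lintegral_ofReal hBint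
      filter_upwards with r
      exact sq_nonneg _
    have hLb : (0:ℝ) ≤ Real.log (2*κ) := Real.log_nonneg (by linarith)
    calc ∫⁻ r in Set.Ioc (2⁻¹:ℝ) κ, ENNReal.ofReal r * nn (r • cv φ)
        ≤ ∫⁻ _r in Set.Ioc (2⁻¹:ℝ) κ,
            ENNReal.ofReal κ * ENNReal.ofReal (4*Br + 2*Real.log (2*κ)*Ar) := by
          apply lintegral_mono_ae
          filter_upwards [ae_restrict_mem measurableSet_Ioc] with r hr
          apply mul_le_mul' (ENNReal.ofReal_le_ofReal hr.2)
          exact ENNReal.ofReal_le_ofReal (hb r hr)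
      _ = ENNReal.ofReal κ * ENNReal.ofReal (4*Br + 2*Real.log (2*κ)*Ar)
            * volume (Set.Ioc (2⁻¹:ℝ) κ) := setLIntegral_const _ _
      _ ≤ ENNReal.ofReal κ * ENNReal.ofReal (4*Br + 2*Real.log (2*κ)*Ar)
            * ENNReal.ofReal κ := by
          apply mul_le_mul_right
          rw [Real.volume_Ioc]
          exact ENNReal.ofReal_le_ofReal (by linarith)
      _ = ENNReal.ofReal (κ^2) * ENNReal.ofReal (4*Br + 2*Real.log (2*κ)*Ar) := by
          rw [mul_comm (ENNReal.ofReal κ) (ENNReal.ofReal (4*Br + 2*Real.log (2*κ)*Ar)),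
            mul_assoc, ← ENNReal.ofReal_mul hκ0.le, ← sq, mul_comm]
      _ ≤ ENNReal.ofReal (κ^2) *
            (4 * Bbar φ + ENNReal.ofReal (4 * Real.log κ) * Abar φ) := by
          apply mul_le_mul_right
          rw [ENNReal.ofReal_add (by linarith) (mul_nonneg (by linarith) hAr0)]
          apply add_le_add
          · rw [ENNReal.ofReal_mul (by norm_num : (0:ℝ) ≤ 4), hBeq]
            simp
          · rw [ENNReal.ofReal_mul (by linarith : (0:ℝ) ≤ 2*Real.log (2*κ)), hAeq]
            exact mul_le_mul_left (ENNReal.ofReal_le_ofReal (by linarith)) _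
  -- integrate the key bound over φ
  have hann : ∫⁻ y in {y : E2 | ‖y‖ ∈ Set.Ioc (2⁻¹:ℝ) κ}, nn y
      ≤ ENNReal.ofReal (κ^2) * (8 * (ENNReal.ofReal (Real.exp 1) * W)
          + ENNReal.ofReal (4 * Real.log κ) * D) := by
    rw [ring_lintegral nn hnnm 2⁻¹ κ (by norm_num)]
    calc ∫⁻ φ in Set.Ioo (-π) π, ∫⁻ r in Set.Ioc (2⁻¹:ℝ) κ, ENNReal.ofReal r * nn (r • cv φ)
        ≤ ∫⁻ φ in Set.Ioo (-π) π, ENNReal.ofReal (κ^2) *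
            (4 * Bbar φ + ENNReal.ofReal (4 * Real.log κ) * Abar φ) :=
          lintegral_mono_ae hkey
      _ = ENNReal.ofReal (κ^2) * ∫⁻ φ in Set.Ioo (-π) π,
            (4 * Bbar φ + ENNReal.ofReal (4 * Real.log κ) * Abar φ) :=
          lintegral_const_mul _ ((hBbarm.const_mul 4).add (hAbarm.const_mul _))
      _ = ENNReal.ofReal (κ^2) * (4 * (∫⁻ φ in Set.Ioo (-π) π, Bbar φ)
          + ENNReal.ofReal (4 * Real.log κ) * ∫⁻ φ in Set.Ioo (-π) π, Abar φ) := by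
          rw [lintegral_add_left (hBbarm.const_mul 4), lintegral_const_mul _ hBbarm,
            lintegral_const_mul _ hAbarm]
      _ ≤ ENNReal.ofReal (κ^2) * (8 * (ENNReal.ofReal (Real.exp 1) * W)
          + ENNReal.ofReal (4 * Real.log κ) * D) := by
          apply mul_le_mul_right
          apply add_le_add
          · calc 4 * ∫⁻ φ in Set.Ioo (-π) π, Bbar φ
                ≤ 4 * (2 * (ENNReal.ofReal (Real.exp 1) * W)) := mul_le_mul_right hBw 4
              _ = 8 * (ENNReal.ofReal (Real.exp 1) * W) := by rw [← mul_assoc]; norm_num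
          · exact mul_le_mul_right hAd _
  -- total bound
  have htotal : ∫⁻ y in {y : E2 | ‖y‖ ≤ κ}, nn y ≤
      ENNReal.ofReal (Real.exp 1) * W + ENNReal.ofReal (κ^2) *
        (8 * (ENNReal.ofReal (Real.exp 1) * W) + ENNReal.ofReal (4 * Real.log κ) * D) := by
    have hsub : {y : E2 | ‖y‖ ≤ κ} ⊆
        {y : E2 | ‖y‖ ≤ 2⁻¹} ∪ {y : E2 | ‖y‖ ∈ Set.Ioc (2⁻¹:ℝ) κ} := by
      intro y hy
      by_cases h : ‖y‖ ≤ 2⁻¹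
      · exact Or.inl h
      · exact Or.inr ⟨lt_of_not_ge h, hy⟩
    calc ∫⁻ y in {y : E2 | ‖y‖ ≤ κ}, nn y
        ≤ ∫⁻ y in {y : E2 | ‖y‖ ≤ 2⁻¹} ∪ {y : E2 | ‖y‖ ∈ Set.Ioc (2⁻¹:ℝ) κ}, nn y :=
          lintegral_mono_set hsub
      _ ≤ (∫⁻ y in {y : E2 | ‖y‖ ≤ 2⁻¹}, nn y)
          + ∫⁻ y in {y : E2 | ‖y‖ ∈ Set.Ioc (2⁻¹:ℝ) κ}, nn y := lintegral_union_le _ _ _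
      _ ≤ _ := add_le_add hsmall hann
  -- convert everything to real numbers
  have hlog4 : (0:ℝ) ≤ 4 * Real.log κ := by linarith
  have hLHS : ∫ y in {y : E2 | ‖y‖ ≤ κ}, ‖v y‖ ^ 2
      = (∫⁻ y in {y : E2 | ‖y‖ ≤ κ}, nn y).toReal := by
    apply integral_eq_lintegral_of_nonneg_ae
    · filter_upwards with y
      exact sq_nonneg _
    · exact (hvc.norm.pow 2).aestronglyMeasurable.restrict
  have hDr : (∫ y : E2, ‖fderiv ℝ v y‖ ^ 2) = D.toReal := by
    apply integral_eq_lintegral_of_nonneg_ae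
    · filter_upwards with y
      exact sq_nonneg _
    · exact (hfdm.norm.pow_const 2).aestronglyMeasurable
  have hWr : (∫ y in {y : E2 | ‖y‖ ≤ 1}, ‖v y‖ ^ 2 * Real.exp (-‖y‖)) = W.toReal := by
    apply integral_eq_lintegral_of_nonneg_ae
    · filter_upwards with y
      exact mul_nonneg (sq_nonneg _) (Real.exp_nonneg _)
    · exact ((hvc.norm.pow 2).mul (Real.continuous_exp.comp
        continuous_norm.neg)).aestronglyMeasurable.restrict
  set Dr : ℝ := D.toReal with hDrdef
  set Wr : ℝ := W.toReal with hWrdef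
  have hDr0 : 0 ≤ Dr := ENNReal.toReal_nonneg
  have hWr0 : 0 ≤ Wr := ENNReal.toReal_nonneg
  -- RHS ennreal is finite, compute its toReal
  have h8 : ((8:ENNReal)) ≠ ⊤ := by norm_num
  have hfin1 : ENNReal.ofReal (Real.exp 1) * W ≠ ⊤ :=
    ENNReal.mul_ne_top ENNReal.ofReal_ne_top hWfin.ne
  have hfin2 : 8 * (ENNReal.ofReal (Real.exp 1) * W) ≠ ⊤ := ENNReal.mul_ne_top h8 hfin1
  have hfin3 : ENNReal.ofReal (4 * Real.log κ) * D ≠ ⊤ :=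
    ENNReal.mul_ne_top ENNReal.ofReal_ne_top hDfin.ne
  have hfin4 : ENNReal.ofReal (κ^2) *
      (8 * (ENNReal.ofReal (Real.exp 1) * W) + ENNReal.ofReal (4 * Real.log κ) * D) ≠ ⊤ :=
    ENNReal.mul_ne_top ENNReal.ofReal_ne_top (by
      rw [ENNReal.add_ne_top]
      exact ⟨hfin2, hfin3⟩)
  have hRHSfin : ENNReal.ofReal (Real.exp 1) * W + ENNReal.ofReal (κ^2) *
      (8 * (ENNReal.ofReal (Real.exp 1) * W) + ENNReal.ofReal (4 * Real.log κ) * D) ≠ ⊤ := by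
    rw [ENNReal.add_ne_top]
    exact ⟨hfin1, hfin4⟩
  have hreal : (∫⁻ y in {y : E2 | ‖y‖ ≤ κ}, nn y).toReal ≤
      Real.exp 1 * Wr + κ^2 * (8 * (Real.exp 1 * Wr) + (4 * Real.log κ) * Dr) := by
    calc (∫⁻ y in {y : E2 | ‖y‖ ≤ κ}, nn y).toReal
        ≤ (ENNReal.ofReal (Real.exp 1) * W + ENNReal.ofReal (κ^2) *
            (8 * (ENNReal.ofReal (Real.exp 1) * W)
              + ENNReal.ofReal (4 * Real.log κ) * D)).toReal :=
          ENNReal.toReal_mono hRHSfin htotal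
      _ = Real.exp 1 * Wr + κ^2 * (8 * (Real.exp 1 * Wr) + (4 * Real.log κ) * Dr) := by
          rw [ENNReal.toReal_add hfin1 hfin4, ENNReal.toReal_mul, ENNReal.toReal_mul,
            ENNReal.toReal_add hfin2 hfin3, ENNReal.toReal_mul, ENNReal.toReal_mul,
            ENNReal.toReal_mul, ENNReal.toReal_ofReal (Real.exp_nonneg 1),
            ENNReal.toReal_ofReal (sq_nonneg κ), ENNReal.toReal_ofReal hlog4]
          norm_num
          rfl
  -- final numeric comparison
  rw [hLHS, hDr, hWr]
  have he : Real.exp 1 < 2.7182818286 := Real.exp_one_lt_d9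
  have hlog2 : (0.6931471803:ℝ) < Real.log 2 := Real.log_two_gt_d9
  have hlogκ : Real.log 2 ≤ Real.log κ := Real.log_le_log (by norm_num) hκ
  have hκ2 : (4:ℝ) ≤ κ^2 := by nlinarith
  have he0 : (0:ℝ) < Real.exp 1 := Real.exp_pos 1
  refine le_trans hreal ?_
  have p1 : (0:ℝ) ≤ κ^2 * Wr := mul_nonneg (by positivity) hWr0
  have p2 : (0:ℝ) ≤ κ^2 * Dr := mul_nonneg (by positivity) hDr0
  nlinarith [mul_le_mul_of_nonneg_right hlogκ p1, mul_le_mul_of_nonneg_right hlogκ p2,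
    mul_le_mul_of_nonneg_right he.le hWr0, mul_le_mul_of_nonneg_right he.le p1,
    mul_le_mul_of_nonneg_right hlog2.le p1, mul_le_mul_of_nonneg_right hlog2.le p2,
    mul_nonneg hlogκ0.le p2, mul_nonneg hlogκ0.le p1, mul_nonneg hWr0 (by positivity : (0:ℝ) ≤ κ^2)]


end Stmt1Aux

end

/-- There exists a universal constant C > 0 such that for all κ ≥ 2 and
all v ∈ H¹(ℝ²), ∫_{|y|≤κ} |v|² ≤ C κ² (log κ) ( ∫ |∇v|² + ∫_{|y|≤1} |v|² e^{−|y|} ). -/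
theorem stmt_1 :
    ∃ C : ℝ, 0 < C ∧
      ∀ κ : ℝ, 2 ≤ κ →
      ∀ v : EuclideanSpace ℝ (Fin 2) → ℂ,
        Differentiable ℝ v →
        MemLp v 2 (volume : Measure (EuclideanSpace ℝ (Fin 2))) →
        MemLp (fun y => fderiv ℝ v y) 2 (volume : Measure (EuclideanSpace ℝ (Fin 2))) →
        ∫ y in {y : EuclideanSpace ℝ (Fin 2) | ‖y‖ ≤ κ}, ‖v y‖ ^ 2 ≤
          C * κ ^ 2 * Real.log κ *
            ((∫ y : EuclideanSpace ℝ (Fin 2), ‖fderiv ℝ v y‖ ^ 2) +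
              ∫ y in {y : EuclideanSpace ℝ (Fin 2) | ‖y‖ ≤ 1},
                ‖v y‖ ^ 2 * Real.exp (-‖y‖)) := by
  exact Stmt1Aux.main
end

section
/- Quadratic phase removal for self-similar profiles: Let m ∈ ℤ, b ∈ ℝ, and let P : (0,∞) → ℝ be twice continuously differentiable. Define Q_b : ℝ² ∖ {0} → ℂ in polar coordinates by Q_b(r cos θ, r sin θ) = e^{imθ} P(r) e^{−i b r²/4}. Then Q_b satisfies Δ Q_b − Q_b + i b Λ Q_b + Q_b |Q_b|² = 0 pointwise on ℝ² ∖ {0} if and only if P satisfies P''(r) + (1/r) P'(r) − (1 + m²/r² − b²r²/4) P(r) + P(r)³ = 0 for all r > 0. -/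
/-- Partial derivative in the real direction of a function on ℂ ≅ ℝ². -/
noncomputable def cd1 (f : ℂ → ℂ) (z : ℂ) : ℂ := deriv (fun t : ℝ => f (z + (t : ℂ))) 0

/-- Partial derivative in the imaginary direction of a function on ℂ ≅ ℝ². -/
noncomputable def cd2 (f : ℂ → ℂ) (z : ℂ) : ℂ :=
  deriv (fun t : ℝ => f (z + (t : ℂ) * Complex.I)) 0

/-- Laplacian of a function on ℂ ≅ ℝ². -/
noncomputable def clap (f : ℂ → ℂ) (z : ℂ) : ℂ := cd1 (cd1 f) z + cd2 (cd2 f) z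

namespace S12

/-- norm along real line -/
lemma norm_line_re (w : ℂ) (hw : w ≠ 0) :
    HasDerivAt (fun t : ℝ => ‖w + (t : ℂ)‖) (w.re / ‖w‖) 0 := by
  have hfun : (fun t : ℝ => ‖w + (t : ℂ)‖)
      = fun t : ℝ => Real.sqrt ((w.re + t) ^ 2 + w.im ^ 2) := by
    funext t
    rw [Complex.norm_def, Complex.normSq_apply]
    simp [add_sq]
    ring_nf
  rw [hfun]
  have hq : HasDerivAt (fun t : ℝ => (w.re + t) ^ 2 + w.im ^ 2) (2 * (w.re + 0)) 0 := by
    have h1 : HasDerivAt (fun t : ℝ => w.re + t) 1 0 := (hasDerivAt_id 0).const_add w.re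
    simpa using (h1.pow 2).add_const (w.im ^ 2)
  have hne : (w.re + 0) ^ 2 + w.im ^ 2 ≠ 0 := by
    have := (Complex.normSq_pos.mpr hw).ne'
    rw [Complex.normSq_apply] at this
    intro h; exact this (by nlinarith)
  have := hq.sqrt hne
  convert this using 1
  rw [Complex.norm_def, Complex.normSq_apply]
  rw [show w.re * w.re + w.im * w.im = (w.re + 0)^2 + w.im^2 by ring]
  rw [show (2:ℝ) * (w.re+0) = 2 * w.re by ring]
  rw [mul_div_mul_left _ _ (two_ne_zero)]

lemma norm_line_im (w : ℂ) (hw : w ≠ 0) :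
    HasDerivAt (fun t : ℝ => ‖w + (t : ℂ) * Complex.I‖) (w.im / ‖w‖) 0 := by
  have hfun : (fun t : ℝ => ‖w + (t : ℂ) * Complex.I‖)
      = fun t : ℝ => Real.sqrt (w.re ^ 2 + (w.im + t) ^ 2) := by
    funext t
    rw [Complex.norm_def, Complex.normSq_apply]
    simp
    ring_nf
  rw [hfun]
  have hq : HasDerivAt (fun t : ℝ => w.re ^ 2 + (w.im + t) ^ 2) (2 * (w.im + 0)) 0 := by
    have h1 : HasDerivAt (fun t : ℝ => w.im + t) 1 0 := (hasDerivAt_id 0).const_add w.im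
    simpa using (h1.pow 2).const_add (w.re ^ 2)
  have hne : w.re ^ 2 + (w.im + 0) ^ 2 ≠ 0 := by
    have := (Complex.normSq_pos.mpr hw).ne'
    rw [Complex.normSq_apply] at this
    intro h; exact this (by nlinarith)
  have := hq.sqrt hne
  convert this using 1
  rw [Complex.norm_def, Complex.normSq_apply]
  rw [show w.re * w.re + w.im * w.im = w.re^2 + (w.im + 0)^2 by ring]
  rw [show (2:ℝ) * (w.im+0) = 2 * w.im by ring]
  rw [mul_div_mul_left _ _ (two_ne_zero)]


lemma zpow_line_re (k : ℤ) (w : ℂ) (hw : w ≠ 0) :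
    HasDerivAt (fun t : ℝ => (w + (t : ℂ)) ^ k) ((k : ℂ) * w ^ (k - 1)) 0 := by
  have h : HasDerivAt (fun s : ℂ => (w + s) ^ k) ((k : ℂ) * w ^ (k - 1)) ((0:ℝ):ℂ) := by
    have h1 : HasDerivAt (fun s : ℂ => w + s) 1 ((0:ℝ):ℂ) := (hasDerivAt_id _).const_add w
    have h2 : HasDerivAt (fun z : ℂ => z ^ k) ((k : ℂ) * w ^ (k - 1)) (w + ((0:ℝ):ℂ)) := by
      simpa using hasDerivAt_zpow k w (Or.inl hw)
    simpa [Function.comp_def] using h2.comp _ h1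
  exact h.comp_ofReal

lemma zpow_line_im (k : ℤ) (w : ℂ) (hw : w ≠ 0) :
    HasDerivAt (fun t : ℝ => (w + (t : ℂ) * Complex.I) ^ k)
      ((k : ℂ) * w ^ (k - 1) * Complex.I) 0 := by
  have h : HasDerivAt (fun s : ℂ => (w + s * Complex.I) ^ k)
      ((k : ℂ) * w ^ (k - 1) * Complex.I) ((0:ℝ):ℂ) := by
    have h1 : HasDerivAt (fun s : ℂ => w + s * Complex.I) Complex.I ((0:ℝ):ℂ) := by
      simpa using ((hasDerivAt_id ((0:ℝ):ℂ)).mul_const Complex.I).const_add w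
    have h2 : HasDerivAt (fun z : ℂ => z ^ k) ((k : ℂ) * w ^ (k - 1))
        (w + ((0:ℝ):ℂ) * Complex.I) := by
      simpa using hasDerivAt_zpow k w (Or.inl hw)
    simpa [Function.comp_def] using h2.comp ((0:ℝ):ℂ) h1
  exact h.comp_ofReal

lemma chain_g {g : ℝ → ℂ} {c : ℂ} {ρ : ℝ → ℝ} {ρ' : ℝ} (hg : HasDerivAt g c (ρ 0))
    (hρ : HasDerivAt ρ ρ' 0) : HasDerivAt (fun t => g (ρ t)) (((ρ' : ℝ) : ℂ) * c) 0 := by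
  have := HasDerivAt.scomp (x := 0) hg hρ
  simpa [Function.comp_def, Complex.real_smul] using this

noncomputable def U (m : ℤ) (g : ℝ → ℂ) (w : ℂ) : ℂ := w ^ m * g ‖w‖

noncomputable def U1 (m : ℤ) (g g1 : ℝ → ℂ) (w : ℂ) : ℂ :=
  (m : ℂ) * w ^ (m - 1) * g ‖w‖ + w ^ m * ((w.re / ‖w‖ : ℝ) : ℂ) * g1 ‖w‖

noncomputable def U2 (m : ℤ) (g g1 : ℝ → ℂ) (w : ℂ) : ℂ :=
  Complex.I * (m : ℂ) * w ^ (m - 1) * g ‖w‖ + w ^ m * ((w.im / ‖w‖ : ℝ) : ℂ) * g1 ‖w‖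

lemma hasDerivAt_U_re (m : ℤ) (g g1 : ℝ → ℂ) (w : ℂ) (hw : w ≠ 0)
    (hg : HasDerivAt g (g1 ‖w‖) ‖w‖) :
    HasDerivAt (fun t : ℝ => U m g (w + (t : ℂ))) (U1 m g g1 w) 0 := by
  have h1 := zpow_line_re m w hw
  have h2 : HasDerivAt (fun t : ℝ => g ‖w + (t : ℂ)‖) (((w.re / ‖w‖ : ℝ) : ℂ) * g1 ‖w‖) 0 := by
    have hρ := norm_line_re w hw
    have : HasDerivAt g (g1 ‖w‖) ((fun t : ℝ => ‖w + (t:ℂ)‖) 0) := by simpa using hg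
    exact chain_g this hρ
  have := h1.mul h2
  unfold U U1
  convert this using 1
  · rfl
  · rfl
  simp
  ring

lemma hasDerivAt_U_im (m : ℤ) (g g1 : ℝ → ℂ) (w : ℂ) (hw : w ≠ 0)
    (hg : HasDerivAt g (g1 ‖w‖) ‖w‖) :
    HasDerivAt (fun t : ℝ => U m g (w + (t : ℂ) * Complex.I)) (U2 m g g1 w) 0 := by
  have h1 := zpow_line_im m w hw
  have h2 : HasDerivAt (fun t : ℝ => g ‖w + (t : ℂ) * Complex.I‖)
      (((w.im / ‖w‖ : ℝ) : ℂ) * g1 ‖w‖) 0 := by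
    have hρ := norm_line_im w hw
    have : HasDerivAt g (g1 ‖w‖) ((fun t : ℝ => ‖w + (t:ℂ) * Complex.I‖) 0) := by simpa using hg
    exact chain_g this hρ
  have := h1.mul h2
  unfold U U2
  convert this using 1
  · rfl
  · rfl
  simp
  ring


lemma chain_norm_re (w : ℂ) (hw : w ≠ 0) {g g1 : ℝ → ℂ} (hg : HasDerivAt g (g1 ‖w‖) ‖w‖) :
    HasDerivAt (fun t : ℝ => g ‖w + (t : ℂ)‖) (((w.re / ‖w‖ : ℝ) : ℂ) * g1 ‖w‖) 0 := by
  have hρ := norm_line_re w hw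
  have : HasDerivAt g (g1 ‖w‖) ((fun t : ℝ => ‖w + (t:ℂ)‖) 0) := by simpa using hg
  exact chain_g this hρ

lemma chain_norm_im (w : ℂ) (hw : w ≠ 0) {g g1 : ℝ → ℂ} (hg : HasDerivAt g (g1 ‖w‖) ‖w‖) :
    HasDerivAt (fun t : ℝ => g ‖w + (t : ℂ) * Complex.I‖) (((w.im / ‖w‖ : ℝ) : ℂ) * g1 ‖w‖) 0 := by
  have hρ := norm_line_im w hw
  have : HasDerivAt g (g1 ‖w‖) ((fun t : ℝ => ‖w + (t:ℂ) * Complex.I‖) 0) := by simpa using hg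
  exact chain_g this hρ

lemma hasDerivAt_U1_re (m : ℤ) (g g1 g2 : ℝ → ℂ) (w : ℂ) (hw : w ≠ 0)
    (hg : HasDerivAt g (g1 ‖w‖) ‖w‖) (hg1 : HasDerivAt g1 (g2 ‖w‖) ‖w‖) :
    HasDerivAt (fun t : ℝ => U1 m g g1 (w + (t : ℂ)))
      ((m : ℂ) * ((m : ℂ) - 1) * w ^ (m - 2) * g ‖w‖
        + 2 * (m : ℂ) * w ^ (m - 1) * ((w.re / ‖w‖ : ℝ) : ℂ) * g1 ‖w‖
        + w ^ m * (((1 / ‖w‖ - w.re ^ 2 / ‖w‖ ^ 3) : ℝ) : ℂ) * g1 ‖w‖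
        + w ^ m * (((w.re ^ 2 / ‖w‖ ^ 2) : ℝ) : ℂ) * g2 ‖w‖) 0 := by
  have hr : (0:ℝ) < ‖w‖ := norm_pos_iff.mpr hw
  have hfun : (fun t : ℝ => U1 m g g1 (w + (t : ℂ)))
      = fun t : ℝ => (m : ℂ) * ((w + (t : ℂ)) ^ (m - 1) * g ‖w + (t : ℂ)‖)
          + ((w + (t : ℂ)) ^ m * (((w.re + t) / ‖w + (t : ℂ)‖ : ℝ) : ℂ)) * g1 ‖w + (t : ℂ)‖ := by
    funext t
    simp only [U1, Complex.add_re, Complex.ofReal_re]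
    ring
  rw [hfun]
  have h1 := zpow_line_re (m - 1) w hw
  rw [show m - 1 - 1 = m - 2 by ring] at h1
  have hm := zpow_line_re m w hw
  have hx := chain_norm_re w hw hg
  have hx1 := chain_norm_re w hw hg1
  have hden0 : ‖w + ((0:ℝ):ℂ)‖ ≠ 0 := by simpa using hr.ne'
  have hρ : HasDerivAt (fun t : ℝ => ((w.re + t) / ‖w + (t:ℂ)‖ : ℝ))
      ((1 * ‖w + ((0:ℝ):ℂ)‖ - (w.re + 0) * (w.re / ‖w‖)) / ‖w + ((0:ℝ):ℂ)‖ ^ 2) 0 := by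
    have hnum : HasDerivAt (fun t : ℝ => w.re + t) 1 0 := (hasDerivAt_id 0).const_add w.re
    exact hnum.div (norm_line_re w hw) hden0
  have hcast := hρ.ofReal_comp
  have raw := ((h1.mul hx).const_mul (m:ℂ)).add ((hm.mul hcast).mul hx1)
  convert raw using 1
  · rfl
  · rfl
  have e0 : w + ((0:ℝ):ℂ) = w := by simp
  simp only [Pi.mul_apply, Pi.add_apply]
  rw [e0]
  push_cast
  have hrne : ((‖w‖:ℝ):ℂ) ≠ 0 := by exact_mod_cast hr.ne'
  have hs : ((‖w‖ : ℝ):ℂ) * ((‖w‖ : ℝ):ℂ)⁻¹ = 1 := by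
    apply mul_inv_cancel₀
    simpa using hrne
  field_simp
  linear_combination (0:ℂ) * hs

lemma hasDerivAt_U2_im (m : ℤ) (g g1 g2 : ℝ → ℂ) (w : ℂ) (hw : w ≠ 0)
    (hg : HasDerivAt g (g1 ‖w‖) ‖w‖) (hg1 : HasDerivAt g1 (g2 ‖w‖) ‖w‖) :
    HasDerivAt (fun t : ℝ => U2 m g g1 (w + (t : ℂ) * Complex.I))
      (-((m : ℂ) * ((m : ℂ) - 1) * w ^ (m - 2) * g ‖w‖)
        + 2 * Complex.I * (m : ℂ) * w ^ (m - 1) * ((w.im / ‖w‖ : ℝ) : ℂ) * g1 ‖w‖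
        + w ^ m * (((1 / ‖w‖ - w.im ^ 2 / ‖w‖ ^ 3) : ℝ) : ℂ) * g1 ‖w‖
        + w ^ m * (((w.im ^ 2 / ‖w‖ ^ 2) : ℝ) : ℂ) * g2 ‖w‖) 0 := by
  have hr : (0:ℝ) < ‖w‖ := norm_pos_iff.mpr hw
  have hfun : (fun t : ℝ => U2 m g g1 (w + (t : ℂ) * Complex.I))
      = fun t : ℝ => (Complex.I * (m : ℂ)) * ((w + (t : ℂ) * Complex.I) ^ (m - 1)
            * g ‖w + (t : ℂ) * Complex.I‖)
          + ((w + (t : ℂ) * Complex.I) ^ m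
              * (((w.im + t) / ‖w + (t : ℂ) * Complex.I‖ : ℝ) : ℂ)) * g1 ‖w + (t : ℂ) * Complex.I‖ := by
    funext t
    simp only [U2, Complex.add_im, Complex.mul_im, Complex.ofReal_re, Complex.ofReal_im,
      Complex.I_re, Complex.I_im]
    ring_nf
  rw [hfun]
  have h1 := zpow_line_im (m - 1) w hw
  rw [show m - 1 - 1 = m - 2 by ring] at h1
  have hm := zpow_line_im m w hw
  have hx := chain_norm_im w hw hg
  have hx1 := chain_norm_im w hw hg1
  have hden0 : ‖w + ((0:ℝ):ℂ) * Complex.I‖ ≠ 0 := by simpa using hr.ne'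
  have hρ : HasDerivAt (fun t : ℝ => ((w.im + t) / ‖w + (t:ℂ) * Complex.I‖ : ℝ))
      ((1 * ‖w + ((0:ℝ):ℂ) * Complex.I‖ - (w.im + 0) * (w.im / ‖w‖))
        / ‖w + ((0:ℝ):ℂ) * Complex.I‖ ^ 2) 0 := by
    have hnum : HasDerivAt (fun t : ℝ => w.im + t) 1 0 := (hasDerivAt_id 0).const_add w.im
    exact hnum.div (norm_line_im w hw) hden0
  have hcast := hρ.ofReal_comp
  have raw := ((h1.mul hx).const_mul (Complex.I * (m:ℂ))).add ((hm.mul hcast).mul hx1)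
  convert raw using 1
  · rfl
  · rfl
  have e0 : w + ((0:ℝ):ℂ) * Complex.I = w := by simp
  simp only [Pi.mul_apply, Pi.add_apply]
  rw [e0]
  push_cast
  have hrne : ((‖w‖:ℝ):ℂ) ≠ 0 := by exact_mod_cast hr.ne'
  have hI : Complex.I ^ 2 = -1 := Complex.I_sq
  have hs : ((‖w‖ : ℝ):ℂ) * ((‖w‖ : ℝ):ℂ)⁻¹ = 1 := by
    apply mul_inv_cancel₀
    simpa using hrne
  field_simp
  linear_combination (-(m:ℂ) * ((m:ℂ) - 1) * w ^ (m - 2) * g (‖w‖) * ((‖w‖:ℝ):ℂ)^3) * hI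
    + (0:ℂ) * hs


lemma combineA (m : ℤ) (w : ℂ) (hw : w ≠ 0) (G G1 G2 : ℂ) :
    ((m : ℂ) * ((m : ℂ) - 1) * w ^ (m - 2) * G
        + 2 * (m : ℂ) * w ^ (m - 1) * ((w.re / ‖w‖ : ℝ) : ℂ) * G1
        + w ^ m * (((1 / ‖w‖ - w.re ^ 2 / ‖w‖ ^ 3) : ℝ) : ℂ) * G1
        + w ^ m * (((w.re ^ 2 / ‖w‖ ^ 2) : ℝ) : ℂ) * G2)
      + (-((m : ℂ) * ((m : ℂ) - 1) * w ^ (m - 2) * G)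
        + 2 * Complex.I * (m : ℂ) * w ^ (m - 1) * ((w.im / ‖w‖ : ℝ) : ℂ) * G1
        + w ^ m * (((1 / ‖w‖ - w.im ^ 2 / ‖w‖ ^ 3) : ℝ) : ℂ) * G1
        + w ^ m * (((w.im ^ 2 / ‖w‖ ^ 2) : ℝ) : ℂ) * G2)
      = w ^ m * (G2 + ((2 * (m : ℂ) + 1) / ((‖w‖ : ℝ) : ℂ)) * G1) := by
  have hr : (0:ℝ) < ‖w‖ := norm_pos_iff.mpr hw
  have hRne : ((‖w‖ : ℝ) : ℂ) ≠ 0 := by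
    exact_mod_cast hr.ne'
  have hs : ((‖w‖:ℝ):ℂ) * ((‖w‖:ℝ):ℂ)⁻¹ = 1 := mul_inv_cancel₀ hRne
  have hxy : ((w.re:ℝ):ℂ)^2 + ((w.im:ℝ):ℂ)^2 = ((‖w‖:ℝ):ℂ)^2 := by
    have h0 : w.re^2 + w.im^2 = (‖w‖)^2 := by
      rw [Complex.sq_norm, Complex.normSq_apply]; ring
    exact_mod_cast h0
  have hw' : ((w.re:ℝ):ℂ) + ((w.im:ℝ):ℂ) * Complex.I = w := Complex.re_add_im w
  have hm1 : w ^ (m-1) * w = w ^ m := by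
    rw [← zpow_add_one₀ hw]; congr 1; ring
  push_cast
  linear_combination (w^m * (G2 * ((‖w‖:ℝ):ℂ)⁻¹^2 - G1 * ((‖w‖:ℝ):ℂ)⁻¹^3)) * hxy
    + ((((‖w‖:ℝ):ℂ) * ((‖w‖:ℝ):ℂ)⁻¹ + 1)
        * (w^m*G2 - w^m*G1*((‖w‖:ℝ):ℂ)⁻¹)) * hs
    + (2*(m:ℂ)*w^(m-1)*G1*((‖w‖:ℝ):ℂ)⁻¹) * hw'
    + (2*(m:ℂ)*G1*((‖w‖:ℝ):ℂ)⁻¹) * hm1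

lemma combineLam (m : ℤ) (g g1 : ℝ → ℂ) (w : ℂ) (hw : w ≠ 0) :
    U m g w + (w.re : ℂ) * U1 m g g1 w + (w.im : ℂ) * U2 m g g1 w
      = w ^ m * (((m : ℂ) + 1) * g ‖w‖ + ((‖w‖ : ℝ) : ℂ) * g1 ‖w‖) := by
  have hr : (0:ℝ) < ‖w‖ := norm_pos_iff.mpr hw
  have hRne : ((‖w‖ : ℝ) : ℂ) ≠ 0 := by
    exact_mod_cast hr.ne'
  have hs : ((‖w‖:ℝ):ℂ) * ((‖w‖:ℝ):ℂ)⁻¹ = 1 := mul_inv_cancel₀ hRne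
  have hxy : ((w.re:ℝ):ℂ)^2 + ((w.im:ℝ):ℂ)^2 = ((‖w‖:ℝ):ℂ)^2 := by
    have h0 : w.re^2 + w.im^2 = (‖w‖)^2 := by
      rw [Complex.sq_norm, Complex.normSq_apply]; ring
    exact_mod_cast h0
  have hw' : ((w.re:ℝ):ℂ) + ((w.im:ℝ):ℂ) * Complex.I = w := Complex.re_add_im w
  have hm1 : w ^ (m-1) * w = w ^ m := by
    rw [← zpow_add_one₀ hw]; congr 1; ring
  unfold U U1 U2
  push_cast
  linear_combination (w^m * g1 (‖w‖) * ((‖w‖:ℝ):ℂ)⁻¹) * hxy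
    + (w^m * g1 (‖w‖) * ((‖w‖:ℝ):ℂ)) * hs
    + ((m:ℂ) * w^(m-1) * g (‖w‖)) * hw'
    + ((m:ℂ) * g (‖w‖)) * hm1

noncomputable def Eb (b : ℝ) (r : ℝ) : ℂ := Complex.exp (-Complex.I * (b:ℂ) * (r:ℂ)^2/4)

noncomputable def gG (m : ℤ) (b : ℝ) (P : ℝ → ℝ) (r : ℝ) : ℂ :=
  ((r:ℝ):ℂ)^(-m) * ((P r : ℝ):ℂ) * Eb b r

noncomputable def g1G (m : ℤ) (b : ℝ) (P P' : ℝ → ℝ) (r : ℝ) : ℂ :=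
  ((r:ℝ):ℂ)^(-m) * Eb b r
    * ((P' r : ℂ) + (P r : ℂ) * (-(m:ℂ)/(r:ℂ) - Complex.I*(b:ℂ)*(r:ℂ)/2))

noncomputable def g2G (m : ℤ) (b : ℝ) (P P' P'' : ℝ → ℝ) (r : ℝ) : ℂ :=
  ((r:ℝ):ℂ)^(-m) * Eb b r
    * ((P'' r : ℂ) + 2*(P' r : ℂ)*(-(m:ℂ)/(r:ℂ) - Complex.I*(b:ℂ)*(r:ℂ)/2)
        + (P r : ℂ)*((-(m:ℂ)/(r:ℂ) - Complex.I*(b:ℂ)*(r:ℂ)/2)^2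
            + (m:ℂ)/(r:ℂ)^2 - Complex.I*(b:ℂ)/2))

lemma hasDerivAt_Eb (b : ℝ) (r : ℝ) :
    HasDerivAt (fun t : ℝ => Eb b t) (Eb b r * (-Complex.I*(b:ℂ)*(r:ℂ)/2)) r := by
  have h2 : HasDerivAt (fun t:ℝ => ((t:ℂ))^2) (2*(r:ℂ)) r := by
    simpa using (hasDerivAt_pow 2 (r:ℂ)).comp_ofReal
  have h3 := h2.const_mul (-Complex.I*(b:ℂ)/4)
  have hfun : (fun t:ℝ => -Complex.I*(b:ℂ)/4 * ((t:ℂ))^2)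
      = fun t:ℝ => -Complex.I*(b:ℂ)*((t:ℂ))^2/4 := by
    funext t; ring
  rw [hfun] at h3
  have h4 := h3.cexp
  unfold Eb
  convert h4 using 1
  ring

lemma zpow_ofReal (k : ℤ) (r : ℝ) (hr : r ≠ 0) :
    HasDerivAt (fun t:ℝ => ((t:ℂ))^k) ((k:ℂ) * ((r:ℂ))^(k-1)) r := by
  have := (hasDerivAt_zpow k (r:ℂ) (Or.inl (by exact_mod_cast hr))).comp_ofReal
  simpa using this

lemma hasDerivAt_gG (m : ℤ) (b : ℝ) (P P' : ℝ → ℝ) (r : ℝ) (hr : 0 < r)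
    (hP : HasDerivAt P (P' r) r) :
    HasDerivAt (gG m b P) (g1G m b P P' r) r := by
  have hRne : ((r:ℝ):ℂ) ≠ 0 := by exact_mod_cast hr.ne'
  have hz := zpow_ofReal (-m) r hr.ne'
  have hp := hP.ofReal_comp
  have hE := hasDerivAt_Eb b r
  have raw := (hz.mul hp).mul hE
  have hzz : ((r:ℝ):ℂ)^(-m-1) = ((r:ℝ):ℂ)^(-m) * ((r:ℝ):ℂ)⁻¹ := by
    rw [zpow_sub_one₀ hRne]
  unfold gG g1G
  convert raw using 1
  · rfl
  · rfl
  rw [hzz]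
  simp only [Pi.mul_apply, Pi.add_apply]
  push_cast
  ring

lemma hasDerivAt_g1G (m : ℤ) (b : ℝ) (P P' P'' : ℝ → ℝ) (r : ℝ) (hr : 0 < r)
    (hP : HasDerivAt P (P' r) r) (hP2 : HasDerivAt P' (P'' r) r) :
    HasDerivAt (g1G m b P P') (g2G m b P P' P'' r) r := by
  have hRne : ((r:ℝ):ℂ) ≠ 0 := by exact_mod_cast hr.ne'
  have hz := zpow_ofReal (-m) r hr.ne'
  have hp := hP.ofReal_comp
  have hp2 := hP2.ofReal_comp
  have hE := hasDerivAt_Eb b r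
  have hc : HasDerivAt (fun t:ℝ => -(m:ℂ)/(t:ℂ) - Complex.I*(b:ℂ)*(t:ℂ)/2)
      ((m:ℂ)/(r:ℂ)^2 - Complex.I*(b:ℂ)/2) r := by
    have hinv : HasDerivAt (fun t:ℝ => ((t:ℂ))⁻¹) (-(((r:ℂ))^2)⁻¹) r := by
      have := (hasDerivAt_inv (x := (r:ℂ)) (by exact_mod_cast hr.ne')).comp_ofReal
      simpa using this
    have h1 := hinv.const_mul (-(m:ℂ))
    have ht : HasDerivAt (fun t:ℝ => ((t:ℂ))) 1 r := by
      simpa using (hasDerivAt_id r).ofReal_comp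
    have h2 := ht.const_mul (Complex.I*(b:ℂ)/2)
    have hfun : (fun t:ℝ => -(m:ℂ)/(t:ℂ) - Complex.I*(b:ℂ)*(t:ℂ)/2)
        = fun t:ℝ => (-(m:ℂ)) * ((t:ℂ))⁻¹ - (Complex.I*(b:ℂ)/2) * (t:ℂ) := by
      funext t; ring
    rw [hfun]
    convert h1.sub h2 using 1
    · rfl
    · rfl
    ring
  have hbr := hp2.add (hp.mul hc)
  have raw := (hz.mul hE).mul hbr
  have hzz : ((r:ℝ):ℂ)^(-m-1) = ((r:ℝ):ℂ)^(-m) * ((r:ℝ):ℂ)⁻¹ := by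
    rw [zpow_sub_one₀ hRne]
  unfold g1G g2G
  convert raw using 1
  · rfl
  · rfl
  rw [hzz]
  simp only [Pi.mul_apply, Pi.add_apply]
  push_cast
  ring

lemma bracket_eq (m : ℤ) (b : ℝ) (P P' P'' : ℝ → ℝ) (r : ℝ) (hr : 0 < r) :
    g2G m b P P' P'' r + ((2*(m:ℂ)+1)/((r:ℝ):ℂ)) * g1G m b P P' r - gG m b P r
      + Complex.I*(b:ℂ)*(((m:ℂ)+1)*gG m b P r + ((r:ℝ):ℂ)*g1G m b P P' r)
      + gG m b P r * ((P r : ℝ):ℂ)^2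
    = ((r:ℝ):ℂ)^(-m) * Eb b r
        * ((P'' r + (1 / r) * P' r
            - (1 + (m : ℝ) ^ 2 / r ^ 2 - b ^ 2 * r ^ 2 / 4) * P r + (P r) ^ 3 : ℝ) : ℂ) := by
  have hRne : ((r:ℝ):ℂ) ≠ 0 := by exact_mod_cast hr.ne'
  have hs : ((r:ℝ):ℂ) * ((r:ℝ):ℂ)⁻¹ = 1 := mul_inv_cancel₀ hRne
  have hI : Complex.I^2 = -1 := Complex.I_sq
  unfold gG g1G g2G
  push_cast
  linear_combination (-(1/4)*((r:ℝ):ℂ)^2*((P r:ℝ):ℂ)*((b:ℝ):ℂ)^2*((r:ℝ):ℂ)^(-m)*Eb b r) * hI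
    + ((-(1/2)*Complex.I*((P r:ℝ):ℂ)*((b:ℝ):ℂ)*((r:ℝ):ℂ)^(-m)*Eb b r
        - Complex.I*((P r:ℝ):ℂ)*((b:ℝ):ℂ)*(m:ℂ)*((r:ℝ):ℂ)^(-m)*Eb b r)) * hs

lemma abs_Eb (b r : ℝ) : ‖Eb b r‖ = 1 := by
  unfold Eb
  have h : -Complex.I * (b:ℂ) * (r:ℂ)^2/4 = ((-(b*r^2/4) : ℝ):ℂ) * Complex.I := by
    push_cast; ring
  rw [h, Complex.norm_exp_ofReal_mul_I]

lemma absU (m : ℤ) (b : ℝ) (P : ℝ → ℝ) (w : ℂ) (hw : w ≠ 0) :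
    ‖U m (gG m b P) w‖ = |P ‖w‖| := by
  have hr : (0:ℝ) < ‖w‖ := norm_pos_iff.mpr hw
  unfold U gG
  rw [norm_mul, norm_mul, norm_mul, norm_zpow, norm_zpow, Complex.norm_of_nonneg hr.le,
    Complex.norm_real, Real.norm_eq_abs, abs_Eb]
  have h1 : (‖w‖)^m * (‖w‖)^(-m) = 1 := by
    rw [← zpow_add₀ hr.ne']; simp
  linear_combination |P (‖w‖)| * h1

lemma normsqU (m : ℤ) (b : ℝ) (P : ℝ → ℝ) (w : ℂ) (hw : w ≠ 0) :
    ((‖U m (gG m b P) w‖ : ℝ) : ℂ)^2 = ((P ‖w‖ : ℝ) : ℂ)^2 := by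
  rw [absU m b P w hw]
  have h : |P ‖w‖|^2 = (P ‖w‖)^2 := sq_abs _
  exact_mod_cast h

end S12

/-- Quadratic phase removal for self-similar profiles: for m ∈ ℤ, b ∈ ℝ and
P twice continuously differentiable on (0,∞), the function
Q_b(r e^{iθ}) = e^{imθ} P(r) e^{−ibr²/4} satisfies ΔQ_b − Q_b + ibΛQ_b + Q_b|Q_b|² = 0 on
ℝ² ∖ {0} iff P satisfies P'' + (1/r)P' − (1 + m²/r² − b²r²/4)P + P³ = 0 on (0,∞). -/
theorem stmt_12 (m : ℤ) (b : ℝ) (P P' P'' : ℝ → ℝ)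
    (hP' : ∀ r : ℝ, 0 < r → HasDerivAt P (P' r) r)
    (hP'' : ∀ r : ℝ, 0 < r → HasDerivAt P' (P'' r) r)
    (hPcont : ContinuousOn P'' (Set.Ioi (0 : ℝ)))
    (Qb : ℂ → ℂ)
    (hQb : ∀ r : ℝ, 0 < r → ∀ θ : ℝ,
      Qb ((r : ℂ) * Complex.exp ((θ : ℂ) * Complex.I))
        = Complex.exp ((m : ℂ) * (θ : ℂ) * Complex.I) * ((P r : ℝ) : ℂ) *
            Complex.exp (-Complex.I * (b : ℂ) * (r : ℂ) ^ 2 / 4)) :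
    (∀ z : ℂ, z ≠ 0 →
        clap Qb z - Qb z
          + Complex.I * (b : ℂ) *
              (Qb z + (z.re : ℂ) * cd1 Qb z + (z.im : ℂ) * cd2 Qb z)
          + Qb z * ((‖Qb z‖ : ℂ)) ^ 2 = 0)
    ↔ (∀ r : ℝ, 0 < r →
        P'' r + (1 / r) * P' r
          - (1 + (m : ℝ) ^ 2 / r ^ 2 - b ^ 2 * r ^ 2 / 4) * P r + (P r) ^ 3 = 0) := by
  have hgd : ∀ r : ℝ, 0 < r → HasDerivAt (S12.gG m b P) (S12.g1G m b P P' r) r :=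
    fun r hr => S12.hasDerivAt_gG m b P P' r hr (hP' r hr)
  have hg1d : ∀ r : ℝ, 0 < r → HasDerivAt (S12.g1G m b P P') (S12.g2G m b P P' P'' r) r :=
    fun r hr => S12.hasDerivAt_g1G m b P P' P'' r hr (hP' r hr) (hP'' r hr)
  -- Qb agrees with U off the origin
  have hQU : ∀ w : ℂ, w ≠ 0 → Qb w = S12.U m (S12.gG m b P) w := by
    intro w hw
    have hr : (0:ℝ) < ‖w‖ := norm_pos_iff.mpr hw
    have h := hQb (‖w‖) hr (Complex.arg w)
    rw [Complex.norm_mul_exp_arg_mul_I w] at h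
    rw [h]
    unfold S12.U S12.gG S12.Eb
    have hwm : w ^ m = ((‖w‖ : ℝ):ℂ) ^ m
        * Complex.exp ((Complex.arg w : ℂ) * Complex.I) ^ m := by
      conv_lhs => rw [← Complex.norm_mul_exp_arg_mul_I w]
      rw [mul_zpow]
    have hem : Complex.exp ((Complex.arg w : ℂ) * Complex.I) ^ m
        = Complex.exp ((m : ℂ) * (Complex.arg w : ℂ) * Complex.I) := by
      rw [← Complex.exp_int_mul]
      congr 1
      ring
    have h1 : ((‖w‖ : ℝ):ℂ) ^ m * ((‖w‖ : ℝ):ℂ) ^ (-m) = 1 := by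
      rw [← zpow_add₀ (by exact_mod_cast hr.ne' : ((‖w‖:ℝ):ℂ) ≠ 0)]
      simp
    rw [hwm, hem]
    linear_combination (-(Complex.exp ((m : ℂ) * (Complex.arg w : ℂ) * Complex.I)
      * ((P (‖w‖) : ℝ):ℂ)
      * Complex.exp (-Complex.I * (b:ℂ) * ((‖w‖ : ℝ):ℂ)^2/4))) * h1
  -- eventual nonvanishing along the two directions
  have hne1 : ∀ w : ℂ, w ≠ 0 → (∀ᶠ t : ℝ in nhds 0, w + (t : ℂ) ≠ 0) := by
    intro w hw
    have hcont : Continuous (fun t : ℝ => w + (t : ℂ)) :=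
      continuous_const.add Complex.continuous_ofReal
    have := (hcont.continuousAt (x := 0)).eventually_ne (y := (0:ℂ)) (by simpa using hw)
    simpa using this
  have hne2 : ∀ w : ℂ, w ≠ 0 → (∀ᶠ t : ℝ in nhds 0, w + (t : ℂ) * Complex.I ≠ 0) := by
    intro w hw
    have hcont : Continuous (fun t : ℝ => w + (t : ℂ) * Complex.I) :=
      continuous_const.add (Complex.continuous_ofReal.mul continuous_const)
    have := (hcont.continuousAt (x := 0)).eventually_ne (y := (0:ℂ)) (by simpa using hw)
    simpa using this
  -- first partial derivatives
  have hcd1 : ∀ w : ℂ, w ≠ 0 → cd1 Qb w = S12.U1 m (S12.gG m b P) (S12.g1G m b P P') w := by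
    intro w hw
    have hd := S12.hasDerivAt_U_re m (S12.gG m b P) (S12.g1G m b P P') w hw
      (hgd ‖w‖ (norm_pos_iff.mpr hw))
    have hev : (fun t : ℝ => Qb (w + (t:ℂ))) =ᶠ[nhds 0]
        (fun t : ℝ => S12.U m (S12.gG m b P) (w + (t:ℂ))) :=
      (hne1 w hw).mono (fun t ht => hQU _ ht)
    exact (hd.congr_of_eventuallyEq hev).deriv
  have hcd2 : ∀ w : ℂ, w ≠ 0 → cd2 Qb w = S12.U2 m (S12.gG m b P) (S12.g1G m b P P') w := by
    intro w hw
    have hd := S12.hasDerivAt_U_im m (S12.gG m b P) (S12.g1G m b P P') w hw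
      (hgd ‖w‖ (norm_pos_iff.mpr hw))
    have hev : (fun t : ℝ => Qb (w + (t:ℂ) * Complex.I)) =ᶠ[nhds 0]
        (fun t : ℝ => S12.U m (S12.gG m b P) (w + (t:ℂ) * Complex.I)) :=
      (hne2 w hw).mono (fun t ht => hQU _ ht)
    exact (hd.congr_of_eventuallyEq hev).deriv
  -- Laplacian
  have hclap : ∀ w : ℂ, w ≠ 0 → clap Qb w
      = w ^ m * (S12.g2G m b P P' P'' ‖w‖
          + ((2 * (m : ℂ) + 1) / ((‖w‖ : ℝ) : ℂ)) * S12.g1G m b P P' ‖w‖) := by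
    intro w hw
    have hnw := norm_pos_iff.mpr hw
    have hA := S12.hasDerivAt_U1_re m (S12.gG m b P) (S12.g1G m b P P')
      (S12.g2G m b P P' P'') w hw (hgd ‖w‖ hnw) (hg1d ‖w‖ hnw)
    have hB := S12.hasDerivAt_U2_im m (S12.gG m b P) (S12.g1G m b P P')
      (S12.g2G m b P P' P'') w hw (hgd ‖w‖ hnw) (hg1d ‖w‖ hnw)
    have hevA : (fun t : ℝ => cd1 Qb (w + (t:ℂ))) =ᶠ[nhds 0]
        (fun t : ℝ => S12.U1 m (S12.gG m b P) (S12.g1G m b P P') (w + (t:ℂ))) :=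
      (hne1 w hw).mono (fun t ht => hcd1 _ ht)
    have hevB : (fun t : ℝ => cd2 Qb (w + (t:ℂ) * Complex.I)) =ᶠ[nhds 0]
        (fun t : ℝ => S12.U2 m (S12.gG m b P) (S12.g1G m b P P') (w + (t:ℂ) * Complex.I)) :=
      (hne2 w hw).mono (fun t ht => hcd2 _ ht)
    have h1 := (hA.congr_of_eventuallyEq hevA).deriv
    have h2 := (hB.congr_of_eventuallyEq hevB).deriv
    show cd1 (cd1 Qb) w + cd2 (cd2 Qb) w = _
    rw [show cd1 (cd1 Qb) w = deriv (fun t : ℝ => cd1 Qb (w + (t:ℂ))) 0 from rfl,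
      show cd2 (cd2 Qb) w = deriv (fun t : ℝ => cd2 Qb (w + (t:ℂ) * Complex.I)) 0 from rfl,
      h1, h2]
    exact S12.combineA m w hw (S12.gG m b P ‖w‖) (S12.g1G m b P P' ‖w‖)
      (S12.g2G m b P P' P'' ‖w‖)
  -- pointwise equivalence
  have key : ∀ w : ℂ, w ≠ 0 →
      ((clap Qb w - Qb w
          + Complex.I * (b : ℂ) *
              (Qb w + (w.re : ℂ) * cd1 Qb w + (w.im : ℂ) * cd2 Qb w)
          + Qb w * ((‖Qb w‖ : ℂ)) ^ 2 = 0)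
        ↔ (P'' ‖w‖ + (1 / ‖w‖) * P' ‖w‖
          - (1 + (m : ℝ) ^ 2 / ‖w‖ ^ 2 - b ^ 2 * ‖w‖ ^ 2 / 4) * P ‖w‖ + (P ‖w‖) ^ 3 = 0)) := by
    intro w hw
    have hnw := norm_pos_iff.mpr hw
    have hb := S12.bracket_eq m b P P' P'' ‖w‖ hnw
    rw [hclap w hw, hQU w hw, hcd1 w hw, hcd2 w hw,
      S12.combineLam m (S12.gG m b P) (S12.g1G m b P P') w hw,
      S12.normsqU m b P w hw]
    simp only [S12.U]
    have hwm : w ^ m ≠ 0 := zpow_ne_zero m hw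
    have hZ : ((‖w‖:ℝ):ℂ)^(-m) ≠ 0 := zpow_ne_zero _ (by exact_mod_cast hnw.ne')
    have hE : S12.Eb b ‖w‖ ≠ 0 := Complex.exp_ne_zero _
    constructor
    · intro h
      have h5 : w ^ m * (((‖w‖:ℝ):ℂ)^(-m) * (S12.Eb b ‖w‖
          * ((P'' ‖w‖ + (1 / ‖w‖) * P' ‖w‖
            - (1 + (m : ℝ) ^ 2 / ‖w‖ ^ 2 - b ^ 2 * ‖w‖ ^ 2 / 4) * P ‖w‖
            + (P ‖w‖) ^ 3 : ℝ) : ℂ))) = 0 := by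
        linear_combination h - (w ^ m) * hb
      have h6 := (mul_ne_zero hZ hE)
      have h7 : ((P'' ‖w‖ + (1 / ‖w‖) * P' ‖w‖
            - (1 + (m : ℝ) ^ 2 / ‖w‖ ^ 2 - b ^ 2 * ‖w‖ ^ 2 / 4) * P ‖w‖
            + (P ‖w‖) ^ 3 : ℝ) : ℂ) = 0 := by
        rcases mul_eq_zero.mp h5 with h | h
        · exact absurd h hwm
        · rcases mul_eq_zero.mp h with h | h
          · exact absurd h hZ
          · rcases mul_eq_zero.mp h with h | h
            · exact absurd h hE
            · exact h
      exact_mod_cast h7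
    · intro h
      have h4 : ((P'' ‖w‖ + (1 / ‖w‖) * P' ‖w‖
            - (1 + (m : ℝ) ^ 2 / ‖w‖ ^ 2 - b ^ 2 * ‖w‖ ^ 2 / 4) * P ‖w‖
            + (P ‖w‖) ^ 3 : ℝ) : ℂ) = 0 := by exact_mod_cast h
      linear_combination (w ^ m) * hb
        + (w ^ m * (((‖w‖:ℝ):ℂ)^(-m) * S12.Eb b ‖w‖)) * h4
  constructor
  · intro h r hr
    have hz : ((r:ℝ):ℂ) ≠ 0 := by exact_mod_cast hr.ne'
    have hnr : ‖((r:ℝ):ℂ)‖ = r := by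
      rw [Complex.norm_real]; exact abs_of_pos hr
    have := (key ((r:ℝ):ℂ) hz).mp (h _ hz)
    rwa [hnr] at this
  · intro h w hw
    exact (key w hw).mpr (h ‖w‖ (norm_pos_iff.mpr hw))
end

section
/- Generalized nullspace identity for L₋: Let m ∈ ℤ and let R : (0,∞) → ℝ be twice continuously differentiable and satisfy the radial vortex equation R''(r) + (1/r) R'(r) − (1 + m²/r²) R(r) + R(r)³ = 0 for all r > 0. Define the radial operator L₋ f = −( f'' + (1/r) f' ) + (1 + m²/r²) f − R² f and the scaling operator Λ f (r) = f(r) + r f'(r). Then L₋( r² R ) = −4 Λ R pointwise on (0,∞), where r²R denotes the function r ↦ r² R(r). -/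
/-- Generalized nullspace identity for L₋: if R is twice continuously
differentiable on (0,∞) and satisfies the radial vortex equation
R'' + (1/r)R' − (1 + m²/r²)R + R³ = 0, then L₋(r²R) = −4ΛR on (0,∞), where
L₋ f = −(f'' + (1/r)f') + (1 + m²/r²) f − R² f and Λf(r) = f(r) + r f'(r). -/
theorem stmt_14 (m : ℤ) (R R' R'' : ℝ → ℝ)
    (hR' : ∀ r : ℝ, 0 < r → HasDerivAt R (R' r) r)
    (hR'' : ∀ r : ℝ, 0 < r → HasDerivAt R' (R'' r) r)
    (hRcont : ContinuousOn R'' (Set.Ioi (0 : ℝ)))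
    (hode : ∀ r : ℝ, 0 < r →
      R'' r + (1 / r) * R' r - (1 + (m : ℝ) ^ 2 / r ^ 2) * R r + (R r) ^ 3 = 0) :
    ∀ r : ℝ, 0 < r →
      -(deriv (deriv (fun s => s ^ 2 * R s)) r
          + (1 / r) * deriv (fun s => s ^ 2 * R s) r)
        + (1 + (m : ℝ) ^ 2 / r ^ 2) * (r ^ 2 * R r)
        - (R r) ^ 2 * (r ^ 2 * R r)
      = -4 * (R r + r * R' r) := by
  intro r hr
  have hne : r ≠ 0 := ne_of_gt hr
  have hf : ∀ s : ℝ, 0 < s →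
      HasDerivAt (fun s => s ^ 2 * R s) (2 * s * R s + s ^ 2 * R' s) s := by
    intro s hs
    have : HasDerivAt (fun s => s ^ 2 * R s) _ s := (hasDerivAt_pow 2 s).mul (hR' s hs)
    convert this using 1
    ring
  have hd1 : Set.EqOn (deriv (fun s => s ^ 2 * R s))
      (fun s => 2 * s * R s + s ^ 2 * R' s) (Set.Ioi 0) :=
    fun s hs => (hf s hs).deriv
  have hev : deriv (fun s => s ^ 2 * R s) =ᶠ[nhds r]
      (fun s => 2 * s * R s + s ^ 2 * R' s) :=
    Filter.eventuallyEq_of_mem (isOpen_Ioi.mem_nhds hr) hd1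
  have hg : HasDerivAt (fun s => 2 * s * R s + s ^ 2 * R' s)
      (2 * R r + 2 * r * R' r + (2 * r * R' r + r ^ 2 * R'' r)) r := by
    have h1 : HasDerivAt (fun s => 2 * s * R s) (2 * R r + 2 * r * R' r) r := by
      have := ((hasDerivAt_id r).const_mul 2).mul (hR' r hr)
      simp only [id_eq, mul_one] at this
      exact this
    have h2 : HasDerivAt (fun s => s ^ 2 * R' s) (2 * r * R' r + r ^ 2 * R'' r) r := by
      have : HasDerivAt (fun s => s ^ 2 * R' s) _ r := (hasDerivAt_pow 2 r).mul (hR'' r hr)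
      convert this using 1
      ring
    exact h1.add h2
  have hd2 : deriv (deriv (fun s => s ^ 2 * R s)) r
      = 2 * R r + 2 * r * R' r + (2 * r * R' r + r ^ 2 * R'' r) := by
    rw [hev.deriv_eq]; exact hg.deriv
  rw [hd2, hd1 (Set.mem_Ioi.mpr hr)]
  have hode' := hode r hr
  have hsub : R'' r = -(1 / r) * R' r + (1 + (m : ℝ) ^ 2 / r ^ 2) * R r - (R r) ^ 3 := by
    linarith
  rw [hsub]
  field_simp
  ring
end

section
/- Log-log rate from the Lyapounov dynamic: Let 0 < T < 1/100 and let λ : [0,T) → (0, e^{−e}) be differentiable with λ(t) → 0 as t → T. Suppose there is a constant C > 1 such that for all t ∈ [0,T), 1/C ≤ −(d/dt)( λ(t)² · log log(1/λ(t)) ) ≤ C. Then there exist a constant C' > 1 and t* ∈ [0,T) such that for all t ∈ [t*, T): (1/C') · ( (T−t) / log log(1/(T−t)) )^{1/2} ≤ λ(t) ≤ C' · ( (T−t) / log log(1/(T−t)) )^{1/2}. -/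
set_option maxHeartbeats 1000000

/-- Helper: for `0 < x < exp(-e)` we have `e < log(1/x)` and `1 < log log (1/x)`. -/
lemma stmt18_aux1 {x : ℝ} (hx : 0 < x) (hxe : x < Real.exp (-Real.exp 1)) :
    Real.exp 1 < Real.log (1 / x) ∧ 1 < Real.log (Real.log (1 / x)) := by
  have h1 : Real.log x < -Real.exp 1 := (Real.log_lt_iff_lt_exp hx).mpr hxe
  have h2 : Real.exp 1 < Real.log (1 / x) := by
    rw [one_div, Real.log_inv]; linarith
  refine ⟨h2, ?_⟩
  have := Real.log_lt_log (Real.exp_pos 1) h2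
  rwa [Real.log_exp] at this

/-- Helper: for `0 < x < exp(-e)` we have `log log (1/x) ≤ 1/x`. -/
lemma stmt18_aux2 {x : ℝ} (hx : 0 < x) (hxe : x < Real.exp (-Real.exp 1)) :
    Real.log (Real.log (1 / x)) ≤ 1 / x := by
  have h2 := (stmt18_aux1 hx hxe).1
  have hy : 0 < Real.log (1 / x) := lt_trans (Real.exp_pos 1) h2
  have h3 : Real.log (Real.log (1 / x)) ≤ Real.log (1 / x) - 1 :=
    Real.log_le_sub_one_of_pos hy
  have h4 : Real.log (1 / x) ≤ 1 / x - 1 :=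
    Real.log_le_sub_one_of_pos (by positivity)
  linarith

/-- Log-log rate from the Lyapounov dynamic: if 0 < T < 1/100 and
λ : [0,T) → (0, e^{−e}) is differentiable with λ(t) → 0 as t → T, and there is C > 1 with
1/C ≤ −(d/dt)(λ² log log(1/λ)) ≤ C on [0,T), then there are C' > 1 and t* ∈ [0,T) such
that (1/C')·((T−t)/log log(1/(T−t)))^{1/2} ≤ λ(t) ≤ C'·((T−t)/log log(1/(T−t)))^{1/2}
for all t ∈ [t*,T). -/
theorem stmt_18 (T : ℝ) (hT : 0 < T) (hT' : T < 1 / 100)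
    (lam : ℝ → ℝ)
    (hrange : ∀ t ∈ Set.Ico (0 : ℝ) T, 0 < lam t ∧ lam t < Real.exp (-Real.exp 1))
    (hdiff : DifferentiableOn ℝ lam (Set.Ico (0 : ℝ) T))
    (hlim : Filter.Tendsto lam (nhdsWithin T (Set.Ico (0 : ℝ) T)) (nhds 0))
    (C : ℝ) (hC : 1 < C)
    (hderiv : ∀ t ∈ Set.Ico (0 : ℝ) T,
      1 / C ≤
        -(derivWithin (fun s => lam s ^ 2 * Real.log (Real.log (1 / lam s)))
            (Set.Ico (0 : ℝ) T) t) ∧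
      -(derivWithin (fun s => lam s ^ 2 * Real.log (Real.log (1 / lam s)))
            (Set.Ico (0 : ℝ) T) t) ≤ C) :
    ∃ C' : ℝ, 1 < C' ∧ ∃ tstar ∈ Set.Ico (0 : ℝ) T, ∀ t ∈ Set.Ico tstar T,
      (1 / C') * Real.sqrt ((T - t) / Real.log (Real.log (1 / (T - t)))) ≤ lam t ∧
      lam t ≤ C' * Real.sqrt ((T - t) / Real.log (Real.log (1 / (T - t)))) := by
  have hC0 : 0 < C := lt_trans one_pos hC
  set S : Set ℝ := Set.Ico (0 : ℝ) T with hS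
  set F : ℝ → ℝ := fun s => lam s ^ 2 * Real.log (Real.log (1 / lam s)) with hF
  -- F is differentiable within S at each point of S
  have hFdiff : ∀ t ∈ S, DifferentiableWithinAt ℝ F S t := by
    intro t ht
    by_contra h
    have h0 : derivWithin F S t = 0 := derivWithin_zero_of_not_differentiableWithinAt h
    have h1 := (hderiv t ht).1
    rw [h0] at h1
    have : (0 : ℝ) < 1 / C := by positivity
    simp only [neg_zero] at h1
    linarith
  have hcont : ContinuousOn F S := fun t ht => (hFdiff t ht).continuousWithinAt
  have hconv : Convex ℝ S := convex_Ico 0 T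
  have hdiffInt : DifferentiableOn ℝ F (interior S) := by
    intro x hx
    have hnb : S ∈ nhds x := mem_interior_iff_mem_nhds.mp hx
    exact ((hFdiff x (interior_subset hx)).differentiableAt hnb).differentiableWithinAt
  have hderivEq : ∀ x ∈ interior S, deriv F x = derivWithin F S x := by
    intro x hx
    exact (derivWithin_of_mem_nhds (mem_interior_iff_mem_nhds.mp hx)).symm
  have hderivUB : ∀ x ∈ interior S, deriv F x ≤ -(1 / C) := by
    intro x hx
    rw [hderivEq x hx]
    have := (hderiv x (interior_subset hx)).1
    linarith
  have hderivLB : ∀ x ∈ interior S, -C ≤ deriv F x := by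
    intro x hx
    rw [hderivEq x hx]
    have := (hderiv x (interior_subset hx)).2
    linarith
  -- MVT estimates
  have key : ∀ t ∈ S, ∀ s ∈ S, t ≤ s →
      (1 / C) * (s - t) ≤ F t - F s ∧ F t - F s ≤ C * (s - t) := by
    intro t ht s hs hts
    constructor
    · have := hconv.image_sub_le_mul_sub_of_deriv_le hcont hdiffInt hderivUB t ht s hs hts
      linarith
    · have := hconv.mul_sub_le_image_sub_of_le_deriv hcont hdiffInt hderivLB t ht s hs hts
      linarith
  -- F → 0 at T
  haveI hNB : (nhdsWithin T S).NeBot := by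
    refine mem_closure_iff_nhdsWithin_neBot.mp ?_
    rw [hS, closure_Ico hT.ne]
    exact ⟨hT.le, le_refl T⟩
  have hmemS : ∀ᶠ s in nhdsWithin T S, s ∈ S := eventually_mem_nhdsWithin
  have hFle : ∀ t ∈ S, 0 ≤ F t ∧ F t ≤ lam t := by
    intro t ht
    obtain ⟨hx0, hxe⟩ := hrange t ht
    have hL1 : 1 < Real.log (Real.log (1 / lam t)) := (stmt18_aux1 hx0 hxe).2
    have hLle : Real.log (Real.log (1 / lam t)) ≤ 1 / lam t := stmt18_aux2 hx0 hxe
    constructor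
    · simp only [hF]
      nlinarith [sq_nonneg (lam t)]
    · have h1 : lam t ^ 2 * Real.log (Real.log (1 / lam t)) ≤ lam t ^ 2 * (1 / lam t) :=
        mul_le_mul_of_nonneg_left hLle (sq_nonneg _)
      have h2 : lam t ^ 2 * (1 / lam t) = lam t := by field_simp [hx0.ne']
      simp only [hF]
      linarith
  have hF0 : Filter.Tendsto F (nhdsWithin T S) (nhds 0) :=
    squeeze_zero' (hmemS.mono fun t ht => (hFle t ht).1)
      (hmemS.mono fun t ht => (hFle t ht).2) hlim
  -- F t is comparable to T - t
  have hFbounds : ∀ t ∈ S, (T - t) / C ≤ F t ∧ F t ≤ C * (T - t) := by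
    intro t ht
    have ht' : t < T := ht.2
    have hev : ∀ᶠ s in nhdsWithin T S, t ≤ s :=
      ((eventually_ge_nhds ht').filter_mono nhdsWithin_le_nhds)
    have h1 : Filter.Tendsto (fun s => F t - F s) (nhdsWithin T S) (nhds (F t)) := by
      simpa using (tendsto_const_nhds.sub hF0)
    have h2 : Filter.Tendsto (fun s => C * (s - t)) (nhdsWithin T S) (nhds (C * (T - t))) :=
      ((continuous_const.mul (continuous_id.sub continuous_const)).tendsto T).mono_left nhdsWithin_le_nhds
    have h3 : Filter.Tendsto (fun s => (1 / C) * (s - t)) (nhdsWithin T S)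
        (nhds ((1 / C) * (T - t))) :=
      ((continuous_const.mul (continuous_id.sub continuous_const)).tendsto T).mono_left
        nhdsWithin_le_nhds
    constructor
    · have hle : (1 / C) * (T - t) ≤ F t :=
        le_of_tendsto_of_tendsto h3 h1
          ((hmemS.and hev).mono fun s hs => (key t ht s hs.1 hs.2).1)
      calc (T - t) / C = (1 / C) * (T - t) := by ring
        _ ≤ F t := hle
    · have hle : F t ≤ C * (T - t) :=
        le_of_tendsto_of_tendsto h1 h2
          ((hmemS.and hev).mono fun s hs => (key t ht s hs.1 hs.2).2)
      exact hle
  -- choose constants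
  have hlogC : 0 < Real.log C := Real.log_pos hC
  set M : ℝ := (2 + Real.log C) ^ 2 with hM
  have hM4 : 4 ≤ M := by nlinarith
  have hMlogC : Real.log C ≤ M := by nlinarith
  set δ : ℝ := min (T / 2) (Real.exp (-M)) with hδ
  have hδ0 : 0 < δ := lt_min (by linarith) (Real.exp_pos _)
  have hδT2 : δ ≤ T / 2 := min_le_left _ _
  refine ⟨Real.sqrt (2 * C), ?_, T - δ, ⟨by linarith, by linarith⟩, ?_⟩
  · rw [show (1:ℝ) = Real.sqrt 1 by simp]
    exact Real.sqrt_lt_sqrt (by norm_num) (by linarith)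
  intro t ht
  have htT : t < T := ht.2
  have htstar : T - δ ≤ t := ht.1
  have htS : t ∈ S := ⟨by linarith, htT⟩
  obtain ⟨hx0, hxe⟩ := hrange t htS
  set x : ℝ := lam t with hxdef
  set u : ℝ := T - t with hudef
  have hu0 : 0 < u := by simp only [hudef]; linarith
  have huδ : u ≤ δ := by simp only [hudef]; linarith
  have huM : u ≤ Real.exp (-M) := le_trans huδ (min_le_right _ _)
  set ℓ : ℝ := Real.log (1 / u) with hℓdef
  have hℓM : M ≤ ℓ := by
    have h1 : Real.log u ≤ -M := (Real.log_le_iff_le_exp hu0).mpr huM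
    have h2 : ℓ = -Real.log u := by rw [hℓdef, one_div, Real.log_inv]
    linarith
  have hℓ4 : 4 ≤ ℓ := le_trans hM4 hℓM
  have hℓ0 : 0 < ℓ := by linarith
  have hlogℓpos : 0 < Real.log ℓ := Real.log_pos (by linarith)
  set L : ℝ := Real.log (Real.log (1 / x)) with hLdef
  have hL1 : 1 < L := (stmt18_aux1 hx0 hxe).2
  have hL0 : 0 < L := by linarith
  have hlogx : Real.exp 1 < Real.log (1 / x) := (stmt18_aux1 hx0 hxe).1
  have hlogx0 : 0 < Real.log (1 / x) := lt_trans (Real.exp_pos 1) hlogx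
  have hFb1 : u / C ≤ x ^ 2 * L := (hFbounds t htS).1
  have hFb2 : x ^ 2 * L ≤ C * u := (hFbounds t htS).2
  -- key sqrt inequality: 2 * sqrt ℓ + log C ≤ ℓ
  have hsqℓ : 2 + Real.log C ≤ Real.sqrt ℓ := by
    have h1 : Real.sqrt M ≤ Real.sqrt ℓ := Real.sqrt_le_sqrt hℓM
    have h2 : Real.sqrt M = 2 + Real.log C := by
      rw [hM, Real.sqrt_sq (by linarith)]
    linarith
  have hsq2 : 2 * Real.sqrt ℓ + Real.log C ≤ ℓ := by
    have h1 : Real.sqrt ℓ * Real.sqrt ℓ = ℓ := Real.mul_self_sqrt hℓ0.le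
    nlinarith [Real.sqrt_nonneg ℓ]
  -- log u = -ℓ
  have hlogu : Real.log u = -ℓ := by
    rw [hℓdef, one_div, Real.log_inv]; ring
  -- UPPER BOUND --
  have hx2Cu : x ^ 2 ≤ C * u := by nlinarith [sq_nonneg x]
  have hsqrtCu : 0 < Real.sqrt (C * u) := Real.sqrt_pos.mpr (by positivity)
  have hxleCu : x ≤ Real.sqrt (C * u) := by
    rw [← Real.sqrt_sq hx0.le]
    exact Real.sqrt_le_sqrt hx2Cu
  have hlog1x_ge : Real.sqrt ℓ ≤ Real.log (1 / x) := by
    have h1 : 1 / Real.sqrt (C * u) ≤ 1 / x := by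
      exact one_div_le_one_div_of_le hx0 hxleCu
    have h2 : Real.log (1 / Real.sqrt (C * u)) ≤ Real.log (1 / x) :=
      Real.log_le_log (by positivity) h1
    have h3 : Real.log (1 / Real.sqrt (C * u)) = -(Real.log (C * u)) / 2 := by
      rw [one_div, Real.log_inv, Real.log_sqrt (by positivity)]
      ring
    have h4 : Real.log (C * u) = Real.log C - ℓ := by
      rw [Real.log_mul hC0.ne' hu0.ne', hlogu]; ring
    have h5 : Real.sqrt ℓ ≤ -(Real.log (C * u)) / 2 := by
      rw [h4]; linarith
    linarith
  have hLge : Real.log ℓ / 2 ≤ L := by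
    have h1 : Real.log (Real.sqrt ℓ) ≤ L := by
      have hsp : 0 < Real.sqrt ℓ := Real.sqrt_pos.mpr hℓ0
      exact Real.log_le_log hsp hlog1x_ge
    rwa [Real.log_sqrt hℓ0.le] at h1
  have hupper : x ≤ Real.sqrt (2 * C) * Real.sqrt (u / Real.log ℓ) := by
    have h1 : x ^ 2 * Real.log ℓ ≤ 2 * (C * u) := by nlinarith [sq_nonneg x]
    have h2 : x ^ 2 ≤ 2 * C * (u / Real.log ℓ) := by
      rw [← mul_div_assoc, le_div_iff₀ hlogℓpos]
      nlinarith
    calc x = Real.sqrt (x ^ 2) := (Real.sqrt_sq hx0.le).symm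
      _ ≤ Real.sqrt (2 * C * (u / Real.log ℓ)) := Real.sqrt_le_sqrt h2
      _ = Real.sqrt (2 * C) * Real.sqrt (u / Real.log ℓ) := Real.sqrt_mul (by positivity) _
  -- LOWER BOUND --
  have hLle : L ≤ 1 / x := stmt18_aux2 hx0 hxe
  have hxge : u / C ≤ x := by
    have h2 : x ^ 2 * (1 / x) = x := by
      field_simp
    nlinarith [sq_nonneg x]
  have hxge' : u ≤ C * x := by
    rw [div_le_iff₀ hC0] at hxge
    linarith
  have hxgepos : 0 < u / C := by positivity
  have hLle2 : L ≤ 2 * Real.log ℓ := by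
    have h1 : 1 / x ≤ C / u := by
      rw [div_le_div_iff₀ hx0 hu0]
      linarith
    have h2 : Real.log (1 / x) ≤ Real.log (C / u) := Real.log_le_log (by positivity) h1
    have h3 : Real.log (C / u) = Real.log C + ℓ := by
      rw [Real.log_div hC0.ne' hu0.ne', hlogu]; ring
    have h4 : Real.log (1 / x) ≤ 2 * ℓ := by rw [h3] at h2; linarith
    have h5 : L ≤ Real.log (2 * ℓ) := Real.log_le_log hlogx0 (by linarith)
    have h6 : Real.log (2 * ℓ) = Real.log 2 + Real.log ℓ := by
      rw [Real.log_mul (by norm_num) hℓ0.ne']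
    have h7 : Real.log 2 ≤ Real.log ℓ := Real.log_le_log (by norm_num) (by linarith)
    linarith
  have hlower : (1 / Real.sqrt (2 * C)) * Real.sqrt (u / Real.log ℓ) ≤ x := by
    have ha : x ^ 2 * L ≤ x ^ 2 * (2 * Real.log ℓ) :=
      mul_le_mul_of_nonneg_left hLle2 (sq_nonneg x)
    have hb : u ≤ x ^ 2 * L * C := by
      rw [div_le_iff₀ hC0] at hFb1
      linarith
    have hc : x ^ 2 * L * C ≤ x ^ 2 * (2 * Real.log ℓ) * C :=
      mul_le_mul_of_nonneg_right ha hC0.le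
    have h1 : u ≤ 2 * C * Real.log ℓ * x ^ 2 := by nlinarith
    have h2 : u / Real.log ℓ / (2 * C) ≤ x ^ 2 := by
      rw [div_le_iff₀ (by positivity : (0:ℝ) < 2 * C), div_le_iff₀ hlogℓpos]
      nlinarith
    have h3 : Real.sqrt (u / Real.log ℓ / (2 * C)) ≤ x := by
      rw [← Real.sqrt_sq hx0.le]
      exact Real.sqrt_le_sqrt h2
    have h4 : Real.sqrt (u / Real.log ℓ / (2 * C)) =
        (1 / Real.sqrt (2 * C)) * Real.sqrt (u / Real.log ℓ) := by
      rw [Real.sqrt_div (by positivity : (0:ℝ) ≤ u / Real.log ℓ)]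
      ring
    rw [← h4]
    exact h3
  exact ⟨hlower, hupper⟩
end
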